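/- arXiv:2104.11895 — 7 statements merged into one kernel-verified Lean document; each statement's English description precedes it below -/
import Mathlib

section
/- Let m ≥ (n+1)(d−r+1) and suppose ℓ'(0) > 0. Under the loss assumption and the dataset assumption, if there exists a number C > 0 such that for every k = 1,…,d−r+1, max_{u∈𝔹^d} |Σ_{i=1}^n ℓ'(−y_i f(x_i;θ*)) y_i (u^⊤(x_i⊙φ_k))_+| ≤ C, then the network with parameter θ* achieves training error R_n(θ*;f) ≤ (C + 2E)/(ℓ'(0)·γ·n). -/
open scoped BigOperators
open MeasureTheory

noncomputable section

/-- Vectors in `ℝ^d` with the Euclidean norm. -/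
abbrev Vec (d : ℕ) := EuclideanSpace ℝ (Fin d)

/-- Hadamard (entrywise) product. -/
def nnHad {d : ℕ} (x φ : Vec d) : Vec d := WithLp.toLp 2 (fun i => x i * φ i)

/-- ReLU. -/
def nnRelu (z : ℝ) : ℝ := max z 0

/-- Euclidean dot product. -/
def nnDot {d : ℕ} (u v : Vec d) : ℝ := ∑ i, u i * v i

/-- Output of the two-layer ReLU network with masks `φ`. -/
def nnOut {d m : ℕ} (φ : ℕ → Vec d) (a : Fin m → ℝ) (w : Fin m → Vec d) (x : Vec d) : ℝ :=
  ∑ j, a j * nnRelu (nnDot (w j) (nnHad x (φ (j : ℕ))))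

/-- The regularized empirical loss `L_n(θ; λ)`. -/
def nnLoss {d m n : ℕ} (ℓ : ℝ → ℝ) (φ : ℕ → Vec d) (X : Fin n → Vec d) (Y : Fin n → ℝ)
    (lam : Fin m → ℝ) (θ : (Fin m → ℝ) × (Fin m → Vec d)) : ℝ :=
  (∑ i, ℓ (-(Y i) * nnOut φ θ.1 θ.2 (X i)))
    + (1 / 2) * ∑ j, lam j * ((θ.1 j) ^ 2 + ‖θ.2 j‖ ^ 2)

/-- The training (misclassification) error `R_n(θ; f)`. -/
def nnErr {d m n : ℕ} (φ : ℕ → Vec d) (X : Fin n → Vec d) (Y : Fin n → ℝ)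
    (θ : (Fin m → ℝ) × (Fin m → Vec d)) : ℝ :=
  (1 / (n : ℝ)) * ∑ i, if Y i = Real.sign (nnOut φ θ.1 θ.2 (X i)) then (0 : ℝ) else 1

/-- The masks are binary vectors. -/
def BinaryMasks {d : ℕ} (φ : ℕ → Vec d) : Prop := ∀ k i, φ k i = 0 ∨ φ k i = 1

/-- The mask sequence is periodic with period `p`. -/
def PeriodicMasks {d : ℕ} (φ : ℕ → Vec d) (p : ℕ) : Prop := ∀ k, φ (k + p) = φ k

/-- Assumption 1 on the loss: convex, non-decreasing, twice differentiable, `ℓ` and `ℓ'`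
are `1`-Lipschitz, and `ℓ'(z) ≤ exp (a z)` for a positive constant `a`. -/
def LossAssumption (ℓ ℓ' : ℝ → ℝ) (a : ℝ) : Prop :=
  ConvexOn ℝ Set.univ ℓ ∧ Monotone ℓ ∧ (∀ z, HasDerivAt ℓ (ℓ' z) z) ∧
  (∀ z, DifferentiableAt ℝ ℓ' z) ∧ LipschitzWith 1 ℓ ∧ LipschitzWith 1 ℓ' ∧
  0 < a ∧ ∀ z, ℓ' z ≤ Real.exp (a * z)

/-- Assumption 2 on the dataset: all data in the unit ball, and all but `E` points are
separated with margin `γ` by some network in the class `H_φ`. -/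
def DatasetAssumption {d n : ℕ} (φ : ℕ → Vec d) (X : Fin n → Vec d) (Y : Fin n → ℝ)
    (E γ : ℝ) : Prop :=
  (∀ i, ‖X i‖ ≤ 1) ∧
  ∃ (M : ℕ) (c : Fin M → ℝ) (v : Fin M → Vec d),
    1 ≤ M ∧ (∑ j, |c j|) = 1 ∧ (∀ j, ‖v j‖ = 1) ∧
    (n : ℝ) - E ≤
      ∑ i, (if γ ≤ Y i * ∑ j, c j * nnRelu (nnDot (v j) (nnHad (X i) (φ (j : ℕ)))) then (1 : ℝ)
        else 0)
section MainProof

variable {d : ℕ}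

private lemma had_norm_le {φk x : Vec d} (hb : ∀ i, φk i = 0 ∨ φk i = 1) :
    ‖nnHad x φk‖ ≤ ‖x‖ := by
  rw [EuclideanSpace.norm_eq, EuclideanSpace.norm_eq]
  apply Real.sqrt_le_sqrt
  apply Finset.sum_le_sum
  intro i _
  rcases hb i with h | h <;> simp [nnHad, h, abs_mul, sq_abs]
  · positivity

private lemma nnDot_eq_inner (u v : Vec d) : nnDot u v = (inner ℝ u v : ℝ) := by
  simp [nnDot, PiLp.inner_apply, RCLike.inner_apply, mul_comm]

private lemma abs_nnDot_le (u v : Vec d) : |nnDot u v| ≤ ‖u‖ * ‖v‖ := by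
  rw [nnDot_eq_inner]; exact abs_real_inner_le_norm u v

private lemma nnRelu_nonneg (z : ℝ) : 0 ≤ nnRelu z := le_max_right _ _

private lemma nnRelu_le_abs (z : ℝ) : nnRelu z ≤ |z| := max_le (le_abs_self z) (abs_nonneg z)

end MainProof
theorem flat_directions_memorize
    {d m n r : ℕ} (φ : ℕ → Vec d)
    (X : Fin n → Vec d) (Y : Fin n → ℝ)
    (ℓ ℓ' : ℝ → ℝ) (a E γ C : ℝ)
    (hr : 1 ≤ r) (hrd : r ≤ d)
    (hm : (n + 1) * (d - r + 1) ≤ m)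
    (hmask : BinaryMasks φ) (hper : PeriodicMasks φ (d - r + 1))
    (hY : ∀ i, Y i = 1 ∨ Y i = -1)
    (hloss : LossAssumption ℓ ℓ' a)
    (hE : 0 ≤ E ∧ E ≤ n) (hγ : 0 < γ ∧ γ ≤ 1)
    (hdata : DatasetAssumption φ X Y E γ)
    (hd0 : 0 < ℓ' 0)
    (hC : 0 < C)
    (θstar : (Fin m → ℝ) × (Fin m → Vec d))
    (hflat : ∀ k : ℕ, k < d - r + 1 → ∀ u : Vec d, ‖u‖ ≤ 1 →
      |∑ i, ℓ' (-(Y i) * nnOut φ θstar.1 θstar.2 (X i)) * Y i *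
          nnRelu (nnDot u (nnHad (X i) (φ k)))| ≤ C) :
    nnErr φ X Y θstar ≤ (C + 2 * E) / (ℓ' 0 * γ * n) := by
  obtain ⟨hconv, hmono, hderiv, -, hlip, -, -, -⟩ := hloss
  obtain ⟨hXnorm, M, c, v, -, hc1, hv, hsep⟩ := hdata
  set p := d - r + 1 with hpdef
  have hp : 0 < p := Nat.succ_pos _
  have hdiff : ∀ z, DifferentiableAt ℝ ℓ z := fun z => (hderiv z).differentiableAt
  have hderiv' : ∀ z, deriv ℓ z = ℓ' z := fun z => (hderiv z).deriv
  -- ℓ' is nonnegative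
  have hL'nonneg : ∀ z, 0 ≤ ℓ' z := by
    intro z
    have h1 := hconv.slope_le_deriv (Set.mem_univ (z - 1)) (Set.mem_univ z)
      (by linarith) (hdiff z)
    rw [hderiv'] at h1
    refine le_trans ?_ h1
    rw [slope_def_field]
    have := hmono (show z - 1 ≤ z by linarith)
    have hd1 : z - (z - 1) = 1 := by ring
    rw [hd1]
    simpa using this
  -- ℓ' is at most 1
  have hL'le1 : ∀ z, ℓ' z ≤ 1 := by
    intro z
    have h1 := hconv.deriv_le_slope (Set.mem_univ z) (Set.mem_univ (z + 1))
      (by linarith) (hdiff z)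
    rw [hderiv'] at h1
    refine h1.trans ?_
    rw [slope_def_field]
    have hd1 : z + 1 - z = 1 := by ring
    rw [hd1, div_one]
    have := hlip.dist_le_mul (z + 1) z
    rw [Real.dist_eq, Real.dist_eq] at this
    have h2 : |ℓ (z + 1) - ℓ z| ≤ 1 := by simpa using this
    exact (le_abs_self _).trans h2
  -- ℓ' is monotone
  have hL'mono : Monotone ℓ' := by
    intro x y hxy
    have := hconv.monotoneOn_deriv (fun w _ => hdiff w) (Set.mem_univ x) (Set.mem_univ y) hxy
    rwa [hderiv', hderiv'] at this
  -- mask periodicity via mod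
  have hper' : ∀ j : ℕ, φ j = φ (j % p) := by
    intro j
    conv_lhs => rw [← Nat.mod_add_div j p]
    generalize j / p = q
    induction q with
    | zero => simp
    | succ q ih =>
      have h : j % p + p * (q + 1) = j % p + p * q + p := by ring
      rw [h, hper, ih]
  -- notation
  set f : Fin n → ℝ := fun i => nnOut φ θstar.1 θstar.2 (X i) with hf
  set S : Fin n → ℝ := fun i => ℓ' (-(Y i) * f i) with hS
  set h : Fin n → ℝ := fun i => ∑ j, c j * nnRelu (nnDot (v j) (nnHad (X i) (φ (j : ℕ)))) with hh
  set G : Fin n → ℝ := fun i => if γ ≤ Y i * h i then 1 else 0 with hG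
  set Mis : Fin n → ℝ := fun i => if Y i = Real.sign (f i) then 0 else 1 with hMis
  have habsY : ∀ i, |Y i| = 1 := by
    intro i; rcases hY i with h1 | h1 <;> simp [h1]
  -- |h i| ≤ 1
  have hhb : ∀ i, |h i| ≤ 1 := by
    intro i
    calc |h i| ≤ ∑ j, |c j * nnRelu (nnDot (v j) (nnHad (X i) (φ (j : ℕ))))| :=
          Finset.abs_sum_le_sum_abs _ _
      _ ≤ ∑ j, |c j| * 1 := by
          apply Finset.sum_le_sum
          intro j _
          rw [abs_mul]
          apply mul_le_mul_of_nonneg_left _ (abs_nonneg _)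
          rw [abs_of_nonneg (nnRelu_nonneg _)]
          refine (nnRelu_le_abs _).trans ?_
          refine (abs_nnDot_le _ _).trans ?_
          rw [hv j, one_mul]
          exact (had_norm_le (hmask _)).trans (hXnorm i)
      _ = 1 := by simp [hc1]
  -- upper bound: |∑ i, S i * (Y i * h i)| ≤ C
  have hT : |∑ i, S i * (Y i * h i)| ≤ C := by
    have e1 : ∀ i, S i * (Y i * h i)
        = ∑ j, c j * (S i * Y i * nnRelu (nnDot (v j) (nnHad (X i) (φ ((j : ℕ) % p))))) := by
      intro i
      rw [hh]
      dsimp only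
      simp only [← hper']
      rw [Finset.mul_sum, Finset.mul_sum]
      apply Finset.sum_congr rfl
      intro j _
      ring
    have hswap : ∑ i, S i * (Y i * h i)
        = ∑ j, c j * ∑ i, S i * Y i * nnRelu (nnDot (v j) (nnHad (X i) (φ ((j : ℕ) % p)))) := by
      rw [Finset.sum_congr rfl (fun i _ => e1 i), Finset.sum_comm]
      apply Finset.sum_congr rfl
      intro j _
      rw [Finset.mul_sum]
    rw [hswap]
    calc |∑ j, c j * ∑ i, S i * Y i * nnRelu (nnDot (v j) (nnHad (X i) (φ ((j : ℕ) % p))))|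
        ≤ ∑ j, |c j * ∑ i, S i * Y i * nnRelu (nnDot (v j) (nnHad (X i) (φ ((j : ℕ) % p))))| :=
          Finset.abs_sum_le_sum_abs _ _
      _ ≤ ∑ j, |c j| * C := by
          apply Finset.sum_le_sum
          intro j _
          rw [abs_mul]
          apply mul_le_mul_of_nonneg_left _ (abs_nonneg _)
          exact hflat ((j : ℕ) % p) (Nat.mod_lt _ hp) (v j) (le_of_eq (hv j))
      _ = C := by rw [← Finset.sum_mul, hc1, one_mul]
  -- lower bound pointwise
  have hlow : ∀ i, ℓ' 0 * γ * (G i * Mis i) - (1 - G i) ≤ S i * (Y i * h i) := by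
    intro i
    by_cases hg : γ ≤ Y i * h i
    · have hGi : G i = 1 := by simp [hG, hg]
      rw [hGi]
      by_cases hmi : Y i = Real.sign (f i)
      · have hMi : Mis i = 0 := by simp [hMis, hmi]
        rw [hMi]
        have : 0 ≤ S i * (Y i * h i) :=
          mul_nonneg (hL'nonneg _) (le_trans hγ.1.le hg)
        simpa using this
      · have hMi : Mis i = 1 := by simp [hMis, hmi]
        rw [hMi]
        -- misclassified: Y i * f i ≤ 0
        have hyf : -(Y i) * f i ≥ 0 := by
          rcases hY i with h1 | h1
          · rw [h1] at hmi ⊢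
            have : ¬ 0 < f i := fun hpos => hmi (Real.sign_of_pos hpos).symm
            push_neg at this
            nlinarith
          · rw [h1] at hmi ⊢
            have : ¬ f i < 0 := fun hneg => hmi (Real.sign_of_neg hneg).symm
            push_neg at this
            nlinarith
        have hSi : ℓ' 0 ≤ S i := hL'mono hyf
        have : ℓ' 0 * γ ≤ S i * (Y i * h i) :=
          mul_le_mul hSi hg hγ.1.le (le_trans hd0.le hSi)
        simpa using this
    · have hGi : G i = 0 := by simp [hG, hg]
      rw [hGi]
      have h1 : |S i * (Y i * h i)| ≤ 1 := by
        rw [abs_mul, abs_mul, habsY i, one_mul, abs_of_nonneg (hL'nonneg _)]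
        exact mul_le_one₀ (hL'le1 _) (abs_nonneg _) (hhb i)
      have := neg_abs_le (S i * (Y i * h i))
      simp only [mul_zero, zero_sub, sub_zero]
      linarith
  -- sum the lower bound
  have hsum : ℓ' 0 * γ * (∑ i, G i * Mis i) - ∑ i, (1 - G i) ≤ C := by
    have h1 : ∑ i, (ℓ' 0 * γ * (G i * Mis i) - (1 - G i)) ≤ ∑ i, S i * (Y i * h i) :=
      Finset.sum_le_sum fun i _ => hlow i
    rw [Finset.sum_sub_distrib, ← Finset.mul_sum] at h1
    have h2 : ∑ i, S i * (Y i * h i) ≤ C := (le_abs_self _).trans hT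
    linarith
  -- ∑ (1 - G i) ≤ E
  have hGE : ∑ i, (1 - G i) ≤ E := by
    have h1 : (n : ℝ) - E ≤ ∑ i, G i := hsep
    have h2 : ∑ i, (1 - G i) = (n : ℝ) - ∑ i, G i := by
      rw [Finset.sum_sub_distrib]
      simp
    linarith
  -- ∑ Mis ≤ ∑ G*Mis + ∑ (1 - G)
  have hMG : ∑ i, Mis i ≤ ∑ i, G i * Mis i + ∑ i, (1 - G i) := by
    rw [← Finset.sum_add_distrib]
    apply Finset.sum_le_sum
    intro i _
    by_cases hg : γ ≤ Y i * h i
    · simp [hG, hg]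
    · have : Mis i ≤ 1 := by rw [hMis]; dsimp only; split <;> norm_num
      simp only [hG, if_neg hg]
      linarith
  -- nonnegativity facts
  have hGMnonneg : 0 ≤ ∑ i, G i * Mis i := by
    apply Finset.sum_nonneg
    intro i _
    apply mul_nonneg
    · rw [hG]; dsimp only; split <;> norm_num
    · rw [hMis]; dsimp only; split <;> norm_num
  have hkey : ℓ' 0 * γ * (∑ i, Mis i) ≤ C + 2 * E := by
    have hlg1 : ℓ' 0 * γ ≤ 1 := mul_le_one₀ (hL'le1 0) hγ.1.le hγ.2
    have hlgpos : 0 < ℓ' 0 * γ := mul_pos hd0 hγ.1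
    have h1 : ℓ' 0 * γ * (∑ i, Mis i)
        ≤ ℓ' 0 * γ * (∑ i, G i * Mis i) + ℓ' 0 * γ * (∑ i, (1 - G i)) := by
      rw [← mul_add]
      exact mul_le_mul_of_nonneg_left hMG hlgpos.le
    have h2 : ℓ' 0 * γ * (∑ i, (1 - G i)) ≤ E := by
      calc ℓ' 0 * γ * (∑ i, (1 - G i)) ≤ 1 * E := by
            apply mul_le_mul hlg1 hGE _ zero_le_one
            · apply Finset.sum_nonneg
              intro i _
              rw [hG]; dsimp only; split <;> norm_num
        _ = E := one_mul E
    linarith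
  -- conclude
  rcases Nat.eq_zero_or_pos n with hn | hn
  · subst hn
    simp [nnErr]
  · have hnpos : (0 : ℝ) < n := Nat.cast_pos.mpr hn
    rw [nnErr]
    have hMsum : (∑ i, if Y i = Real.sign (nnOut φ θstar.1 θstar.2 (X i)) then (0:ℝ) else 1)
        = ∑ i, Mis i := rfl
    rw [hMsum]
    have hlgpos : 0 < ℓ' 0 * γ := mul_pos hd0 hγ.1
    have heq : (1 / (n : ℝ)) * (∑ i, Mis i) = (∑ i, Mis i) / n := by ring
    rw [heq, div_le_div_iff₀ hnpos (by positivity)]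
    calc (∑ i, Mis i) * (ℓ' 0 * γ * n) = (ℓ' 0 * γ * (∑ i, Mis i)) * n := by ring
      _ ≤ (C + 2 * E) * n := mul_le_mul_of_nonneg_right hkey hnpos.le
end
end

section
/- Assume ℓ is convex, non-decreasing, differentiable with ℓ'(z) ≤ 1 for all z, and the dataset assumption holds. If there exists C > 0 such that for every k = 1,…,d−r+1, max_{u∈𝔹^d} |Σ_{i=1}^n ℓ'(−y_i f(x_i;θ*)) y_i (u^⊤(x_i⊙φ_k))_+| ≤ C, then Σ_{i=1}^n ℓ'(−y_i f(x_i;θ*)) ≤ (C + 2E)/γ. -/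
open scoped BigOperators
open MeasureTheory

noncomputable section

lemma nnDot_le_norm {d : ℕ} (u w : Vec d) : nnDot u w ≤ ‖u‖ * ‖w‖ := by
  have h : nnDot u w = (inner ℝ u w : ℝ) := by
    simp [nnDot, PiLp.inner_apply, RCLike.inner_apply, mul_comm]
  rw [h]
  exact real_inner_le_norm u w

lemma nnHad_norm_le {d : ℕ} (x φk : Vec d) (hb : ∀ i, φk i = 0 ∨ φk i = 1) :
    ‖nnHad x φk‖ ≤ ‖x‖ := by
  rw [EuclideanSpace.norm_eq, EuclideanSpace.norm_eq]
  apply Real.sqrt_le_sqrt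
  apply Finset.sum_le_sum
  intro i _
  rcases hb i with h | h <;> simp [nnHad, h, sq_abs, sq_nonneg]

theorem flat_directions_small_derivative_sum
    {d m n r : ℕ} (φ : ℕ → Vec d)
    (X : Fin n → Vec d) (Y : Fin n → ℝ)
    (ℓ ℓ' : ℝ → ℝ) (E γ C : ℝ)
    (hr : 1 ≤ r) (hrd : r ≤ d)
    (hmask : BinaryMasks φ) (hper : PeriodicMasks φ (d - r + 1))
    (hY : ∀ i, Y i = 1 ∨ Y i = -1)
    (hconv : ConvexOn ℝ Set.univ ℓ)
    (hmono : Monotone ℓ)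
    (hderiv : ∀ z, HasDerivAt ℓ (ℓ' z) z)
    (hbdd : ∀ z, ℓ' z ≤ 1)
    (hE : 0 ≤ E ∧ E ≤ n) (hγ : 0 < γ ∧ γ ≤ 1)
    (hdata : DatasetAssumption φ X Y E γ)
    (hC : 0 < C)
    (θstar : (Fin m → ℝ) × (Fin m → Vec d))
    (hflat : ∀ k : ℕ, k < d - r + 1 → ∀ u : Vec d, ‖u‖ ≤ 1 →
      |∑ i, ℓ' (-(Y i) * nnOut φ θstar.1 θstar.2 (X i)) * Y i *
          nnRelu (nnDot u (nnHad (X i) (φ k)))| ≤ C) :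
    (∑ i, ℓ' (-(Y i) * nnOut φ θstar.1 θstar.2 (X i))) ≤ (C + 2 * E) / γ := by
  set g : Fin n → ℝ := fun i => ℓ' (-(Y i) * nnOut φ θstar.1 θstar.2 (X i)) with hg
  -- ℓ' is nonnegative
  have hl'nonneg : ∀ z, 0 ≤ ℓ' z := by
    intro z
    have htend : Filter.Tendsto (slope ℓ z) (nhdsWithin z (Set.Ioi z)) (nhds (ℓ' z)) :=
      (hasDerivAt_iff_tendsto_slope.mp (hderiv z)).mono_left
        (nhdsWithin_mono z (fun y hy => ne_of_gt hy))
    refine ge_of_tendsto htend ?_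
    filter_upwards [self_mem_nhdsWithin] with y hy
    have hzy : z < y := hy
    have : 0 ≤ ℓ y - ℓ z := sub_nonneg.mpr (hmono hzy.le)
    rw [slope_def_field]
    exact div_nonneg this (sub_nonneg.mpr hzy.le)
  have hg0 : ∀ i, 0 ≤ g i := fun i => hl'nonneg _
  have hg1 : ∀ i, g i ≤ 1 := fun i => hbdd _
  obtain ⟨hXnorm, M, c, v, hM, hcsum, hvnorm, hmargin⟩ := hdata
  set p : ℕ := d - r + 1 with hp
  have hp0 : 0 < p := Nat.succ_pos _
  have hφmod : ∀ j : ℕ, φ j = φ (j % p) := by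
    intro j
    have hper' : Function.Periodic φ p := hper
    exact (hper'.map_mod_nat j).symm
  -- h i
  set h : Fin n → ℝ := fun i => ∑ j, c j * nnRelu (nnDot (v j) (nnHad (X i) (φ (j : ℕ)))) with hh
  -- each relu term bounded by 1
  have hrelu_bd : ∀ (i : Fin n) (j : Fin M),
      nnRelu (nnDot (v j) (nnHad (X i) (φ (j : ℕ)))) ≤ 1 := by
    intro i j
    have h1 : nnDot (v j) (nnHad (X i) (φ (j : ℕ))) ≤ 1 := by
      calc nnDot (v j) (nnHad (X i) (φ (j : ℕ))) ≤ ‖v j‖ * ‖nnHad (X i) (φ (j : ℕ))‖ :=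
            nnDot_le_norm _ _
        _ ≤ 1 * 1 := by
            apply mul_le_mul (le_of_eq (hvnorm j))
              ((nnHad_norm_le _ _ (hmask _)).trans (hXnorm i)) (norm_nonneg _) zero_le_one
        _ = 1 := one_mul 1
    exact max_le h1 zero_le_one
  have hrelu_nonneg : ∀ z : ℝ, 0 ≤ nnRelu z := fun z => le_max_right z 0
  have habsh : ∀ i, |h i| ≤ 1 := by
    intro i
    calc |h i| ≤ ∑ j, |c j * nnRelu (nnDot (v j) (nnHad (X i) (φ (j : ℕ))))| :=
          Finset.abs_sum_le_sum_abs _ _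
      _ ≤ ∑ j, |c j| := by
          apply Finset.sum_le_sum
          intro j _
          rw [abs_mul, abs_of_nonneg (hrelu_nonneg _)]
          calc |c j| * nnRelu _ ≤ |c j| * 1 :=
                mul_le_mul_of_nonneg_left (hrelu_bd i j) (abs_nonneg _)
            _ = |c j| := mul_one _
      _ = 1 := hcsum
  -- upper bound: ∑ i, g i * (Y i * h i) ≤ C
  have hupper : ∑ i, g i * (Y i * h i) ≤ C := by
    have hswap : ∑ i, g i * (Y i * h i)
        = ∑ j, c j * ∑ i, g i * Y i * nnRelu (nnDot (v j) (nnHad (X i) (φ (j : ℕ)))) := by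
      simp only [hh, Finset.mul_sum]
      rw [Finset.sum_comm]
      exact Finset.sum_congr rfl fun j _ => Finset.sum_congr rfl fun i _ => by ring
    rw [hswap]
    calc ∑ j, c j * ∑ i, g i * Y i * nnRelu (nnDot (v j) (nnHad (X i) (φ (j : ℕ))))
        ≤ |∑ j, c j * ∑ i, g i * Y i * nnRelu (nnDot (v j) (nnHad (X i) (φ (j : ℕ))))| :=
          le_abs_self _
      _ ≤ ∑ j, |c j * ∑ i, g i * Y i * nnRelu (nnDot (v j) (nnHad (X i) (φ (j : ℕ))))| :=
          Finset.abs_sum_le_sum_abs _ _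
      _ ≤ ∑ j, |c j| * C := by
          apply Finset.sum_le_sum
          intro j _
          rw [abs_mul]
          apply mul_le_mul_of_nonneg_left _ (abs_nonneg _)
          have hkey := hflat ((j : ℕ) % p) (Nat.mod_lt _ hp0) (v j) (le_of_eq (hvnorm j))
          rw [← hφmod (j : ℕ)] at hkey
          exact hkey
      _ = C := by rw [← Finset.sum_mul, hcsum, one_mul]
  -- lower bound
  have hlower : γ * (∑ i, g i) - 2 * E ≤ ∑ i, g i * (Y i * h i) := by
    have hstep : ∀ i : Fin n,
        γ * g i - (1 + γ) * (1 - (if γ ≤ Y i * h i then (1:ℝ) else 0)) ≤ g i * (Y i * h i) := by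
      intro i
      by_cases hcase : γ ≤ Y i * h i
      · simp only [hcase, if_pos]
        have : γ * g i ≤ g i * (Y i * h i) := by
          rw [mul_comm γ (g i)]
          exact mul_le_mul_of_nonneg_left hcase (hg0 i)
        linarith
      · simp only [hcase, if_neg, not_false_iff]
        have hYabs : |Y i| = 1 := by rcases hY i with h' | h' <;> simp [h']
        have habs : |g i * (Y i * h i)| ≤ 1 := by
          rw [abs_mul, abs_mul, hYabs, one_mul]
          calc |g i| * |h i| ≤ 1 * 1 := by
                apply mul_le_mul _ (habsh i) (abs_nonneg _) zero_le_one
                rw [abs_of_nonneg (hg0 i)]; exact hg1 i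
            _ = 1 := one_mul 1
        have h1 : -1 ≤ g i * (Y i * h i) := neg_le_of_abs_le habs
        have h2 : γ * g i - (1 + γ) ≤ -1 := by
          have := hg1 i
          nlinarith [hγ.1, hg0 i]
        linarith
    have hsum := Finset.sum_le_sum (fun i (_ : i ∈ Finset.univ) => hstep i)
    rw [Finset.sum_sub_distrib, ← Finset.mul_sum, ← Finset.mul_sum] at hsum
    have hbadsum : ∑ i, (1 - (if γ ≤ Y i * h i then (1:ℝ) else 0)) ≤ E := by
      rw [Finset.sum_sub_distrib, Finset.sum_const, Finset.card_univ, Fintype.card_fin,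
        nsmul_eq_mul, mul_one]
      linarith [hmargin]
    have hcoef : (0:ℝ) ≤ 1 + γ := by linarith [hγ.1]
    have h3 : (1 + γ) * (∑ i, (1 - (if γ ≤ Y i * h i then (1:ℝ) else 0))) ≤ (1 + γ) * E :=
      mul_le_mul_of_nonneg_left hbadsum hcoef
    have h4 : (1 + γ) * E ≤ 2 * E := by nlinarith [hγ.2, hE.1]
    linarith
  -- combine
  have hfinal : γ * (∑ i, g i) ≤ C + 2 * E := by linarith
  rw [le_div_iff₀ hγ.1]
  linarith
end
end

section
/- Let ℓ : ℝ → ℝ be differentiable and let λ_j > 0 for all j ∈ [m]. If θ* = (a_1*,…,a_m*, w_1*,…,w_m*) is a local minimum of the regularized empirical loss L_n(·;λ), then (a_j*)² = ‖w_j*‖₂² for every j ∈ [m]. -/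
open scoped BigOperators
open MeasureTheory

noncomputable section

lemma nnRelu_mul (c z : ℝ) (hc : 0 ≤ c) : nnRelu (c * z) = c * nnRelu z := by
  unfold nnRelu
  rcases le_total z 0 with h | h
  · rw [max_eq_right h, max_eq_right (by nlinarith : c * z ≤ 0), mul_zero]
  · rw [max_eq_left h, max_eq_left (by positivity : (0:ℝ) ≤ c * z)]

lemma nnDot_smul {d : ℕ} (c : ℝ) (u v : Vec d) : nnDot (c • u) v = c * nnDot u v := by
  simp [nnDot, Finset.mul_sum, mul_assoc]

theorem local_min_balanced
    {d m n : ℕ} (φ : ℕ → Vec d)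
    (X : Fin n → Vec d) (Y : Fin n → ℝ)
    (hY : ∀ i, Y i = 1 ∨ Y i = -1)
    (ℓ : ℝ → ℝ) (hdiff : Differentiable ℝ ℓ)
    (lam : Fin m → ℝ) (hlam : ∀ j, 0 < lam j)
    (θstar : (Fin m → ℝ) × (Fin m → Vec d))
    (hmin : IsLocalMin (nnLoss ℓ φ X Y lam) θstar) :
    ∀ j, (θstar.1 j) ^ 2 = ‖θstar.2 j‖ ^ 2 := by
  intro j
  set a := θstar.1 j with ha
  set w := θstar.2 j with hw
  set P : ℝ → (Fin m → ℝ) × (Fin m → Vec d) := fun t =>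
    (Function.update θstar.1 j (Real.exp t * a),
     Function.update θstar.2 j (Real.exp (-t) • w)) with hP
  have hP0 : P 0 = θstar := by
    simp only [hP, Real.exp_zero, one_mul, neg_zero, one_smul]
    exact Prod.ext (Function.update_eq_self j θstar.1) (Function.update_eq_self j θstar.2)
  have hupd1 : Continuous (fun v : ℝ => Function.update θstar.1 j v) := by
    apply continuous_pi; intro i
    simp only [Function.update_apply]
    by_cases h : i = j <;> simp [h] <;> fun_prop
  have hupd2 : Continuous (fun v : Vec d => Function.update θstar.2 j v) := by
    apply continuous_pi; intro i
    simp only [Function.update_apply]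
    by_cases h : i = j <;> simp [h] <;> fun_prop
  have hPc : Continuous P := by
    apply Continuous.prodMk
    · exact hupd1.comp (Real.continuous_exp.mul continuous_const)
    · exact hupd2.comp ((Real.continuous_exp.comp continuous_neg).smul continuous_const)
  have hloc : IsLocalMin (fun t => nnLoss ℓ φ X Y lam (P t)) 0 := by
    have h0 : IsLocalMin (nnLoss ℓ φ X Y lam) (P 0) := by rw [hP0]; exact hmin
    exact h0.comp_continuous hPc.continuousAt
  set K : ℝ := (∑ i, ℓ (-(Y i) * nnOut φ θstar.1 θstar.2 (X i)))
      + (1 / 2) * ∑ i ∈ Finset.univ.erase j, lam i * ((θstar.1 i) ^ 2 + ‖θstar.2 i‖ ^ 2)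
    with hK
  have hout : ∀ t x, nnOut φ (P t).1 (P t).2 x = nnOut φ θstar.1 θstar.2 x := by
    intro t x
    unfold nnOut
    refine Finset.sum_congr rfl (fun k _ => ?_)
    by_cases h : k = j
    · subst h
      simp only [hP, Function.update_self]
      rw [nnDot_smul, nnRelu_mul _ _ (Real.exp_nonneg _)]
      have he : Real.exp t * Real.exp (-t) = 1 := by
        rw [← Real.exp_add]; simp
      linear_combination (a * nnRelu (nnDot w (nnHad x (φ (k:ℕ))))) * he
    · simp [hP, Function.update_of_ne h]
  have hEq : ∀ t, nnLoss ℓ φ X Y lam (P t) =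
      K + (lam j / 2) * (Real.exp (2*t) * a^2 + Real.exp (-(2*t)) * ‖w‖^2) := by
    intro t
    unfold nnLoss
    have hdata : (∑ i, ℓ (-(Y i) * nnOut φ (P t).1 (P t).2 (X i)))
        = ∑ i, ℓ (-(Y i) * nnOut φ θstar.1 θstar.2 (X i)) := by
      refine Finset.sum_congr rfl (fun i _ => ?_)
      rw [hout]
    have hsplit : ∑ i, lam i * (((P t).1 i) ^ 2 + ‖(P t).2 i‖ ^ 2)
        = lam j * ((Real.exp t * a)^2 + ‖Real.exp (-t) • w‖^2)
          + ∑ i ∈ Finset.univ.erase j, lam i * ((θstar.1 i) ^ 2 + ‖θstar.2 i‖ ^ 2) := by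
      rw [← Finset.add_sum_erase _ _ (Finset.mem_univ j)]
      congr 1
      · simp [hP]
      · refine Finset.sum_congr rfl (fun i hi => ?_)
        have h : i ≠ j := Finset.ne_of_mem_erase hi
        simp [hP, Function.update_of_ne h]
    have h1 : (Real.exp t * a)^2 = Real.exp (2*t) * a^2 := by
      rw [mul_pow, ← Real.exp_nat_mul]; ring_nf
    have h2 : ‖Real.exp (-t) • w‖^2 = Real.exp (-(2*t)) * ‖w‖^2 := by
      rw [norm_smul, Real.norm_eq_abs, abs_of_pos (Real.exp_pos _), mul_pow,
        ← Real.exp_nat_mul]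
      ring_nf
    rw [hdata, hsplit, h1, h2, hK]
    ring
  have hloc2 : IsLocalMin (fun t =>
      K + (lam j / 2) * (Real.exp (2*t) * a^2 + Real.exp (-(2*t)) * ‖w‖^2)) 0 := by
    have : (fun t => nnLoss ℓ φ X Y lam (P t)) = fun t =>
        K + (lam j / 2) * (Real.exp (2*t) * a^2 + Real.exp (-(2*t)) * ‖w‖^2) :=
      funext hEq
    rwa [this] at hloc
  have hd1 : HasDerivAt (fun t : ℝ => Real.exp (2*t)) 2 0 := by
    have := ((hasDerivAt_id (0:ℝ)).const_mul 2).exp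
    simpa using this
  have hd2 : HasDerivAt (fun t : ℝ => Real.exp (-(2*t))) (-2) 0 := by
    have := (((hasDerivAt_id (0:ℝ)).const_mul 2).neg).exp
    simpa using this
  have hD : HasDerivAt (fun t =>
      K + (lam j / 2) * (Real.exp (2*t) * a^2 + Real.exp (-(2*t)) * ‖w‖^2))
      ((lam j / 2) * (2 * a^2 + (-2) * ‖w‖^2)) 0 :=
    (((hd1.mul_const (a^2)).add (hd2.mul_const (‖w‖^2))).const_mul (lam j / 2)).const_add K
  have hzero := hloc2.deriv_eq_zero
  rw [hD.deriv] at hzero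
  have hl := hlam j
  nlinarith [hzero, hl]
end
end

section
/- Let ℓ : ℝ → ℝ be differentiable and let θ* be a local minimum of the regularized empirical loss L_n(·;λ). Write ℓ'_i = ℓ'(−y_i f(x_i;θ*)) and I_j = {i ∈ [n] : w_j*^⊤(x_i⊙φ_j) = 0}. Then for every j ∈ [m], the vector λ_j w_j* − Σ_{i=1}^n ℓ'_i y_i a_j* 1{w_j*^⊤(x_i⊙φ_j) > 0} (x_i⊙φ_j) belongs to the set { Σ_{i∈I_j} μ_i ℓ'_i y_i a_j* (x_i⊙φ_j) : μ_i ∈ [0,1] for all i ∈ I_j }. -/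
open scoped BigOperators
open MeasureTheory

noncomputable section

lemma inner_eq_nnDot {d} (u v : Vec d) : (inner ℝ u v : ℝ) = nnDot u v := by
  simp [nnDot, PiLp.inner_apply, RCLike.inner_apply, conj_trivial, mul_comm]


lemma nnDot_comm {d} (u v : Vec d) : nnDot u v = nnDot v u := by
  simp [nnDot, mul_comm]

lemma nnDot_smul_right {d} (u v : Vec d) (c : ℝ) : nnDot u (c • v) = c * nnDot u v := by
  simp [nnDot, Finset.mul_sum]; exact Finset.sum_congr rfl (fun i _ => by ring)

lemma nnDot_sub_right {d} (u v w : Vec d) : nnDot u (v - w) = nnDot u v - nnDot u w := by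
  simp [nnDot, ← Finset.sum_sub_distrib]; exact Finset.sum_congr rfl (fun i _ => by ring)

lemma nnDot_neg_left {d} (u v : Vec d) : nnDot (-u) v = -nnDot u v := by
  simp [nnDot]

lemma nnDot_sum_right {d n : ℕ} (u : Vec d) (f : Fin n → Vec d) :
    nnDot u (∑ i, f i) = ∑ i, nnDot u (f i) := by
  rw [← inner_eq_nnDot, inner_sum]
  exact Finset.sum_congr rfl (fun i _ => inner_eq_nnDot _ _)

lemma nnDot_add_left {d} (u v x : Vec d) : nnDot (u + v) x = nnDot u x + nnDot v x := by
  rw [← inner_eq_nnDot, inner_add_left, inner_eq_nnDot, inner_eq_nnDot]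

lemma nnDot_smul_left {d} (c : ℝ) (u x : Vec d) : nnDot (c • u) x = c * nnDot u x := by
  rw [← inner_eq_nnDot, real_inner_smul_left, inner_eq_nnDot]

lemma aux_subgrad {d n : ℕ} (z : Fin n → Vec d) (b : Fin n → ℝ) (lamj : ℝ) (w : Vec d)
    (keyA : ∀ u : Vec d, (∑ i, b i * (if 0 < nnDot w (z i) then nnDot u (z i)
        else if nnDot w (z i) = 0 then max (nnDot u (z i)) 0 else 0)) ≤ lamj * nnDot w u) :
    ∃ μ : Fin n → ℝ, (∀ i, μ i ∈ Set.Icc (0:ℝ) 1) ∧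
      lamj • w - ∑ i, (b i * (if 0 < nnDot w (z i) then (1:ℝ) else 0)) • z i
        = ∑ i, ((if nnDot w (z i) = 0 then μ i else 0) * b i) • z i := by
  classical
  set p : Fin n → ℝ := fun i => nnDot w (z i) with hp
  set v : Vec d := lamj • w - ∑ i, (b i * (if 0 < p i then (1:ℝ) else 0)) • z i with hv
  set T : (Fin n → ℝ) → Vec d := fun μ => ∑ i, ((if p i = 0 then μ i else 0) * b i) • z i with hT
  suffices h : v ∈ T '' (Set.Icc 0 1) by
    obtain ⟨μ, hμ, hμv⟩ := h
    exact ⟨μ, fun i => ⟨hμ.1 i, hμ.2 i⟩, hμv.symm⟩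
  by_contra hvS
  have hTl : IsLinearMap ℝ T := by
    constructor
    · intro μ ν
      simp only [hT]
      rw [← Finset.sum_add_distrib]
      refine Finset.sum_congr rfl (fun i _ => ?_)
      by_cases h : p i = 0 <;> simp [h, add_mul, add_smul]
    · intro c μ
      simp only [hT]
      rw [Finset.smul_sum]
      refine Finset.sum_congr rfl (fun i _ => ?_)
      by_cases h : p i = 0 <;> simp [h, smul_smul, mul_assoc]
  have hconv : Convex ℝ (T '' Set.Icc 0 1) := (convex_Icc (0:Fin n → ℝ) 1).is_linear_image hTl
  have hcont : Continuous T := by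
    refine continuous_finset_sum _ (fun i _ => ?_)
    by_cases h : p i = 0
    · simp only [h, if_true]
      exact ((continuous_apply i).mul continuous_const).smul continuous_const
    · simp only [h, if_false]
      exact continuous_const
  have hclosed : IsClosed (T '' Set.Icc 0 1) := (isCompact_Icc.image hcont).isClosed
  obtain ⟨f, c, hfS, hfv⟩ := geometric_hahn_banach_closed_point hconv hclosed hvS
  set u : Vec d := (InnerProductSpace.toDual ℝ (Vec d)).symm f with hu
  have hfeq : ∀ x : Vec d, f x = nnDot u x := fun x => by
    rw [← InnerProductSpace.toDual_symm_apply (y := f) (x := x), inner_eq_nnDot]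
  set s : Fin n → ℝ := fun i => nnDot u (z i) with hs
  -- value of f at v
  have hfv' : f v = lamj * nnDot w u - ∑ i, (if 0 < p i then (1:ℝ) else 0) * (b i * s i) := by
    rw [hfeq, hv, nnDot_sub_right, nnDot_smul_right, nnDot_sum_right, nnDot_comm u w]
    congr 1
    refine Finset.sum_congr rfl (fun i _ => ?_)
    rw [nnDot_smul_right]
    by_cases h : 0 < p i <;> simp [h, hs] <;> ring
  -- keyA at -u
  have h1 := keyA (-u)
  have h1' : (∑ i, b i * (if 0 < p i then -s i
      else if p i = 0 then max (-s i) 0 else 0)) ≤ lamj * (-nnDot w u) := by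
    calc (∑ i, b i * (if 0 < p i then -s i else if p i = 0 then max (-s i) 0 else 0))
        = ∑ i, b i * (if 0 < p i then nnDot (-u) (z i)
            else if p i = 0 then max (nnDot (-u) (z i)) 0 else 0) := by
          refine Finset.sum_congr rfl (fun i _ => ?_)
          rw [nnDot_neg_left]
      _ ≤ lamj * nnDot w (-u) := h1
      _ = lamj * (-nnDot w u) := by rw [nnDot_comm w (-u), nnDot_neg_left, nnDot_comm]
  -- upper bound f v ≤ ∑ target
  have h3 : f v ≤ ∑ i, (if p i = 0 then max (b i * s i) 0 else 0) := by
    have h4 : ∑ i, (-(b i * (if 0 < p i then -s i else if p i = 0 then max (-s i) 0 else 0))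
        - (if 0 < p i then (1:ℝ) else 0) * (b i * s i))
        ≤ ∑ i, (if p i = 0 then max (b i * s i) 0 else 0) := by
      refine Finset.sum_le_sum (fun i _ => ?_)
      rcases lt_trichotomy (p i) 0 with h | h | h
      · simp [h, not_lt.mpr h.le, h.ne]
      · simp only [h, lt_irrefl, if_neg (lt_irrefl 0), if_pos rfl]
        rcases le_or_gt (s i) 0 with hsi | hsi
        · rw [max_eq_left (by linarith)]
          calc -(b i * -s i) - 0 * (b i * s i) = b i * s i := by ring
            _ ≤ max (b i * s i) 0 := le_max_left _ _
        · rw [max_eq_right (by linarith)]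
          calc -(b i * 0) - 0 * (b i * s i) = 0 := by ring
            _ ≤ max (b i * s i) 0 := le_max_right _ _
      · have hne : ¬ p i = 0 := by linarith
        simp only [if_pos h, if_neg hne]
        have heq : -(b i * -s i) - 1 * (b i * s i) = 0 := by ring
        linarith
    calc f v = lamj * nnDot w u - ∑ i, (if 0 < p i then (1:ℝ) else 0) * (b i * s i) := hfv'
      _ ≤ (-(∑ i, b i * (if 0 < p i then -s i else if p i = 0 then max (-s i) 0 else 0)))
            - ∑ i, (if 0 < p i then (1:ℝ) else 0) * (b i * s i) := by linarith
      _ = ∑ i, (-(b i * (if 0 < p i then -s i else if p i = 0 then max (-s i) 0 else 0))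
            - (if 0 < p i then (1:ℝ) else 0) * (b i * s i)) := by
          rw [Finset.sum_sub_distrib, ← Finset.sum_neg_distrib]
      _ ≤ _ := h4
  -- the maximizing μ
  set μs : Fin n → ℝ := fun i => if 0 < b i * s i then 1 else 0 with hμs
  have hμmem : μs ∈ Set.Icc (0 : Fin n → ℝ) 1 := by
    constructor <;> intro i <;> by_cases h : 0 < b i * s i <;> simp [hμs, h]
  have hfT : f (T μs) = ∑ i, (if p i = 0 then max (b i * s i) 0 else 0) := by
    rw [hfeq, hT, nnDot_sum_right]
    refine Finset.sum_congr rfl (fun i _ => ?_)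
    rw [nnDot_smul_right]
    by_cases h : p i = 0
    · simp only [h, if_pos rfl]
      by_cases h2 : 0 < b i * s i
      · rw [max_eq_left h2.le]; have e : μs i = 1 := if_pos h2
        simp only [↓reduceIte, hs]; rw [e, one_mul]
      · rw [max_eq_right (not_lt.mp h2)]; simp [hμs, h2]
    · simp [h]
  have := hfS (T μs) ⟨μs, hμmem, rfl⟩
  rw [hfT] at this
  linarith

lemma aux_keyA {d m n : ℕ} (φ : ℕ → Vec d) (X : Fin n → Vec d) (Y : Fin n → ℝ)
    (ℓ ℓ' : ℝ → ℝ) (hderiv : ∀ z, HasDerivAt ℓ (ℓ' z) z)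
    (lam : Fin m → ℝ)
    (θstar : (Fin m → ℝ) × (Fin m → Vec d))
    (hmin : IsLocalMin (nnLoss ℓ φ X Y lam) θstar) (j : Fin m) (u : Vec d) :
    (∑ i, (ℓ' (-(Y i) * nnOut φ θstar.1 θstar.2 (X i)) * Y i * θstar.1 j) *
        (if 0 < nnDot (θstar.2 j) (nnHad (X i) (φ (j : ℕ))) then nnDot u (nnHad (X i) (φ (j : ℕ)))
         else if nnDot (θstar.2 j) (nnHad (X i) (φ (j : ℕ))) = 0
              then max (nnDot u (nnHad (X i) (φ (j : ℕ)))) 0 else 0))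
      ≤ lam j * nnDot (θstar.2 j) u := by
  classical
  set D : Fin n → ℝ := fun i =>
    if 0 < nnDot (θstar.2 j) (nnHad (X i) (φ (j : ℕ))) then nnDot u (nnHad (X i) (φ (j : ℕ)))
    else if nnDot (θstar.2 j) (nnHad (X i) (φ (j : ℕ))) = 0
         then max (nnDot u (nnHad (X i) (φ (j : ℕ)))) 0 else 0 with hD
  set r : Fin n → ℝ → ℝ := fun i t =>
    if 0 < nnDot (θstar.2 j) (nnHad (X i) (φ (j : ℕ)))
    then nnDot (θstar.2 j) (nnHad (X i) (φ (j : ℕ))) + t * nnDot u (nnHad (X i) (φ (j : ℕ)))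
    else if nnDot (θstar.2 j) (nnHad (X i) (φ (j : ℕ))) = 0
         then t * max (nnDot u (nnHad (X i) (φ (j : ℕ)))) 0 else 0 with hr
  set C : Fin n → ℝ := fun i => nnOut φ θstar.1 θstar.2 (X i)
    - θstar.1 j * nnRelu (nnDot (θstar.2 j) (nnHad (X i) (φ (j : ℕ)))) with hC
  set R : ℝ := (1/2) * ∑ k ∈ Finset.univ.erase j, lam k * ((θstar.1 k)^2 + ‖θstar.2 k‖^2)
      + (1/2) * lam j * (θstar.1 j)^2 with hR
  set q : ℝ → ℝ := fun t => ‖θstar.2 j‖^2 + 2 * nnDot (θstar.2 j) u * t + ‖u‖^2 * t^2 with hq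
  set F : ℝ → ℝ := fun t =>
    nnLoss ℓ φ X Y lam (θstar.1, Function.update θstar.2 j (θstar.2 j + t • u)) with hF
  set G : ℝ → ℝ :=
    fun t => (∑ i, ℓ (-(Y i) * (C i + θstar.1 j * r i t))) + R + (1/2) * lam j * q t with hG
  -- decomposition of the network output after updating coordinate j
  have hout : ∀ (wn : Vec d) (x : Vec d),
      nnOut φ θstar.1 (Function.update θstar.2 j wn) x
        = nnOut φ θstar.1 θstar.2 x - θstar.1 j * nnRelu (nnDot (θstar.2 j) (nnHad x (φ (j : ℕ))))
          + θstar.1 j * nnRelu (nnDot wn (nnHad x (φ (j : ℕ)))) := by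
    intro wn x
    unfold nnOut
    rw [← Finset.sum_erase_add _ _ (Finset.mem_univ j),
      ← Finset.sum_erase_add (f := fun k : Fin m =>
        θstar.1 k * nnRelu (nnDot (θstar.2 k) (nnHad x (φ (k : ℕ))))) _ (Finset.mem_univ j)]
    rw [Function.update_self]
    have hsame : ∑ k ∈ Finset.univ.erase j,
        θstar.1 k * nnRelu (nnDot (Function.update θstar.2 j wn k) (nnHad x (φ (k : ℕ))))
        = ∑ k ∈ Finset.univ.erase j,
          θstar.1 k * nnRelu (nnDot (θstar.2 k) (nnHad x (φ (k : ℕ)))) :=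
      Finset.sum_congr rfl fun k hk => by
        rw [Function.update_of_ne (Finset.ne_of_mem_erase hk)]
    rw [hsame]; ring
  -- decomposition of the loss after updating coordinate j
  have hdec : ∀ wn : Vec d,
      nnLoss ℓ φ X Y lam (θstar.1, Function.update θstar.2 j wn)
        = (∑ i, ℓ (-(Y i) * (C i + θstar.1 j * nnRelu (nnDot wn (nnHad (X i) (φ (j : ℕ)))))))
          + R + (1/2) * lam j * ‖wn‖^2 := by
    intro wn
    unfold nnLoss
    have h1 : ∀ i, (-(Y i) * nnOut φ θstar.1 (Function.update θstar.2 j wn) (X i))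
        = -(Y i) * (C i + θstar.1 j * nnRelu (nnDot wn (nnHad (X i) (φ (j : ℕ))))) := by
      intro i
      rw [hout wn (X i)]
      try simp only [hC]
      try ring
    have h2 : ∑ k, lam k * ((θstar.1 k)^2 + ‖Function.update θstar.2 j wn k‖^2)
        = (∑ k ∈ Finset.univ.erase j, lam k * ((θstar.1 k)^2 + ‖θstar.2 k‖^2))
          + lam j * ((θstar.1 j)^2 + ‖wn‖^2) := by
      rw [← Finset.sum_erase_add _ _ (Finset.mem_univ j), Function.update_self]
      congr 1
      exact Finset.sum_congr rfl fun k hk => by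
        rw [Function.update_of_ne (Finset.ne_of_mem_erase hk)]
    simp only [h1, h2]
    rw [hR]
    try ring
  -- q equals the norm term
  have hqeq : ∀ t : ℝ, ‖θstar.2 j + t • u‖^2 = q t := by
    intro t
    rw [hq, norm_add_sq_real, real_inner_smul_right, inner_eq_nnDot, norm_smul]
    simp only [Real.norm_eq_abs, mul_pow, sq_abs]
    ring
  -- pointwise equality of F and G under sign conditions
  have hFG : ∀ t : ℝ, 0 ≤ t →
      (∀ i, (0 < nnDot (θstar.2 j) (nnHad (X i) (φ (j : ℕ))) →
              0 < nnDot (θstar.2 j) (nnHad (X i) (φ (j : ℕ)))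
                + t * nnDot u (nnHad (X i) (φ (j : ℕ)))) ∧
            (nnDot (θstar.2 j) (nnHad (X i) (φ (j : ℕ))) < 0 →
              nnDot (θstar.2 j) (nnHad (X i) (φ (j : ℕ)))
                + t * nnDot u (nnHad (X i) (φ (j : ℕ))) < 0)) → F t = G t := by
    intro t ht hcond
    simp only [hF, hG]
    rw [hdec (θstar.2 j + t • u), hqeq t]
    congr 2
    refine Finset.sum_congr rfl fun i _ => ?_
    have hdot : nnDot (θstar.2 j + t • u) (nnHad (X i) (φ (j : ℕ)))
        = nnDot (θstar.2 j) (nnHad (X i) (φ (j : ℕ))) + t * nnDot u (nnHad (X i) (φ (j : ℕ))) := by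
      rw [nnDot_add_left, nnDot_smul_left]
    rw [hdot]
    simp only [hr]
    rcases lt_trichotomy (nnDot (θstar.2 j) (nnHad (X i) (φ (j : ℕ)))) 0 with h | h | h
    · have h0 : ¬ (0 < nnDot (θstar.2 j) (nnHad (X i) (φ (j : ℕ)))) := not_lt.mpr h.le
      have hlt := (hcond i).2 h
      rw [if_neg h0, if_neg h.ne, nnRelu, max_eq_right hlt.le]
    · have h0 : ¬ (0 < nnDot (θstar.2 j) (nnHad (X i) (φ (j : ℕ)))) := by
        rw [h]; exact lt_irrefl 0
      rw [if_neg h0, if_pos h, h, zero_add, nnRelu]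
      have hmm : t * (nnDot u (nnHad (X i) (φ (j : ℕ))) ⊔ 0)
          = t * nnDot u (nnHad (X i) (φ (j : ℕ))) ⊔ 0 := by
        rw [mul_max_of_nonneg _ _ ht, mul_zero]
      rw [hmm]
    · have hgt := (hcond i).1 h
      rw [if_pos h, nnRelu, max_eq_left hgt.le]
  -- derivative of r i at 0
  have hrd : ∀ i, HasDerivAt (r i) (D i) 0 := by
    intro i
    rcases lt_trichotomy (nnDot (θstar.2 j) (nnHad (X i) (φ (j : ℕ)))) 0 with h | h | h
    · have h0 : ¬ (0 < nnDot (θstar.2 j) (nnHad (X i) (φ (j : ℕ)))) := not_lt.mpr h.le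
      simp only [hr, hD, if_neg h0, if_neg h.ne]
      exact hasDerivAt_const 0 0
    · have h0 : ¬ (0 < nnDot (θstar.2 j) (nnHad (X i) (φ (j : ℕ)))) := by
        rw [h]; exact lt_irrefl 0
      simp only [hr, hD, if_neg h0, if_pos h]
      simpa using (hasDerivAt_id (0:ℝ)).mul_const (max (nnDot u (nnHad (X i) (φ (j : ℕ)))) 0)
    · simp only [hr, hD, if_pos h]
      simpa using ((hasDerivAt_id (0:ℝ)).mul_const
        (nnDot u (nnHad (X i) (φ (j : ℕ))))).const_add (nnDot (θstar.2 j) (nnHad (X i) (φ (j : ℕ))))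
  -- value of r i at 0
  have hr0 : ∀ i, C i + θstar.1 j * r i 0 = nnOut φ θstar.1 θstar.2 (X i) := by
    intro i
    rcases lt_trichotomy (nnDot (θstar.2 j) (nnHad (X i) (φ (j : ℕ)))) 0 with h | h | h
    · have h0 : ¬ (0 < nnDot (θstar.2 j) (nnHad (X i) (φ (j : ℕ)))) := not_lt.mpr h.le
      simp only [hr, hC, if_neg h0, if_neg h.ne, nnRelu, max_eq_right h.le]
      ring
    · have h0 : ¬ (0 < nnDot (θstar.2 j) (nnHad (X i) (φ (j : ℕ)))) := by
        rw [h]; exact lt_irrefl 0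
      simp only [hr, hC, if_neg h0, if_pos h, h, nnRelu]
      norm_num
    · simp only [hr, hC, if_pos h, nnRelu, max_eq_left h.le]
      ring
  -- derivative of G at 0
  have hGd : HasDerivAt G
      ((∑ i, ℓ' (-(Y i) * (C i + θstar.1 j * r i 0)) * (-(Y i) * (θstar.1 j * D i)))
        + (1/2) * lam j * (2 * nnDot (θstar.2 j) u)) 0 := by
    have hsum : HasDerivAt (fun t => ∑ i, ℓ (-(Y i) * (C i + θstar.1 j * r i t)))
        (∑ i, ℓ' (-(Y i) * (C i + θstar.1 j * r i 0)) * (-(Y i) * (θstar.1 j * D i))) 0 := by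
      refine HasDerivAt.fun_sum fun i _ => ?_
      have hinner : HasDerivAt (fun t => -(Y i) * (C i + θstar.1 j * r i t))
          (-(Y i) * (θstar.1 j * D i)) 0 :=
        (((hrd i).const_mul (θstar.1 j)).const_add (C i)).const_mul (-(Y i))
      exact (hderiv (-(Y i) * (C i + θstar.1 j * r i 0))).comp 0 hinner
    have hqd : HasDerivAt q (2 * nnDot (θstar.2 j) u) 0 := by
      rw [hq]
      have h1 := (hasDerivAt_id (0:ℝ)).const_mul (2 * nnDot (θstar.2 j) u)
      have h2 := (hasDerivAt_pow 2 (0:ℝ)).const_mul (‖u‖^2)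
      simpa [Pi.add_def] using (h1.const_add (‖θstar.2 j‖^2)).add h2
    have hreg : HasDerivAt (fun t => (1/2) * lam j * q t)
        ((1/2) * lam j * (2 * nnDot (θstar.2 j) u)) 0 := by
      simpa [mul_assoc] using hqd.const_mul ((1/2) * lam j)
    exact ((hsum.add_const R).add hreg)
  -- F has a local min at 0
  have hc0 : ((θstar.1, Function.update θstar.2 j (θstar.2 j + (0:ℝ) • u))
      : (Fin m → ℝ) × (Fin m → Vec d)) = θstar := by
    simp [Function.update_eq_self]
  have hFmin : ∀ᶠ t in nhds (0:ℝ), F 0 ≤ F t := by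
    have hcont2 : Continuous fun t : ℝ => Function.update θstar.2 j (θstar.2 j + t • u) :=
      Continuous.update continuous_const j
        (continuous_const.add (continuous_id.smul continuous_const))
    have htend : Filter.Tendsto (fun t : ℝ =>
        ((θstar.1, Function.update θstar.2 j (θstar.2 j + t • u)) : (Fin m → ℝ) × (Fin m → Vec d)))
        (nhds 0) (nhds θstar) := by
      have h5 := (continuous_const.prodMk hcont2 : Continuous (fun t : ℝ =>
        ((θstar.1, Function.update θstar.2 j (θstar.2 j + t • u))
          : (Fin m → ℝ) × (Fin m → Vec d)))).tendsto 0
      simp only [hc0] at h5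
      exact h5
    have hev := htend.eventually hmin
    refine hev.mono fun t h => ?_
    simp only [hF]
    rw [hc0]
    exact h
  -- eventual sign conditions on the right
  have hev : ∀ᶠ t in nhdsWithin (0:ℝ) (Set.Ici 0),
      ∀ i, (0 < nnDot (θstar.2 j) (nnHad (X i) (φ (j : ℕ))) →
              0 < nnDot (θstar.2 j) (nnHad (X i) (φ (j : ℕ)))
                + t * nnDot u (nnHad (X i) (φ (j : ℕ)))) ∧
            (nnDot (θstar.2 j) (nnHad (X i) (φ (j : ℕ))) < 0 →
              nnDot (θstar.2 j) (nnHad (X i) (φ (j : ℕ)))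
                + t * nnDot u (nnHad (X i) (φ (j : ℕ))) < 0) := by
    rw [Filter.eventually_all]
    intro i
    have hcont : Filter.Tendsto (fun t : ℝ => nnDot (θstar.2 j) (nnHad (X i) (φ (j : ℕ)))
        + t * nnDot u (nnHad (X i) (φ (j : ℕ)))) (nhds 0)
        (nhds (nnDot (θstar.2 j) (nnHad (X i) (φ (j : ℕ))))) := by
      have hc : Continuous (fun t : ℝ => nnDot (θstar.2 j) (nnHad (X i) (φ (j : ℕ)))
          + t * nnDot u (nnHad (X i) (φ (j : ℕ)))) :=
        continuous_const.add (continuous_id.mul continuous_const)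
      simpa using hc.tendsto 0
    refine Filter.Eventually.and ?_ ?_
    · by_cases h : 0 < nnDot (θstar.2 j) (nnHad (X i) (φ (j : ℕ)))
      · exact ((hcont.eventually (eventually_gt_nhds h)).filter_mono nhdsWithin_le_nhds).mono
          fun t ht _ => ht
      · exact Filter.Eventually.of_forall fun t h' => absurd h' h
    · by_cases h : nnDot (θstar.2 j) (nnHad (X i) (φ (j : ℕ))) < 0
      · exact ((hcont.eventually (eventually_lt_nhds h)).filter_mono nhdsWithin_le_nhds).mono
          fun t ht _ => ht
      · exact Filter.Eventually.of_forall fun t h' => absurd h' h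
  have hF0 : F 0 = G 0 := by
    refine hFG 0 le_rfl fun i => ⟨fun h => by simpa using h, fun h => by simpa using h⟩
  -- G has a local min from the right at 0
  have hGmin : ∀ᶠ t in nhdsWithin (0:ℝ) (Set.Ioi 0), G 0 ≤ G t := by
    have h1 : ∀ᶠ t in nhdsWithin (0:ℝ) (Set.Ioi 0), F t = G t := by
      have h2 := hev.filter_mono (nhdsWithin_mono (0:ℝ) Set.Ioi_subset_Ici_self)
      filter_upwards [h2, self_mem_nhdsWithin] with t hc ht
      exact hFG t (le_of_lt ht) hc
    have h3 := hFmin.filter_mono (nhdsWithin_le_nhds (s := Set.Ioi (0:ℝ)))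
    filter_upwards [h1, h3] with t hFGt hle
    rw [← hFGt, ← hF0]; exact hle
  -- hence the right derivative of G is nonnegative
  have hpos : 0 ≤ (∑ i, ℓ' (-(Y i) * (C i + θstar.1 j * r i 0)) * (-(Y i) * (θstar.1 j * D i)))
      + (1/2) * lam j * (2 * nnDot (θstar.2 j) u) := by
    have hslope := (hasDerivAt_iff_tendsto_slope.mp hGd).mono_left
      (nhdsWithin_mono (0:ℝ) (fun x (hx : x ∈ Set.Ioi (0:ℝ)) => ne_of_gt hx))
    refine ge_of_tendsto hslope ?_
    filter_upwards [hGmin, self_mem_nhdsWithin] with t hle ht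
    rw [slope_def_field]
    have ht0 : (0:ℝ) < t - 0 := by simpa using ht
    exact div_nonneg (by linarith) ht0.le
  -- rearrange
  have hsum_eq : (∑ i, ℓ' (-(Y i) * (C i + θstar.1 j * r i 0)) * (-(Y i) * (θstar.1 j * D i)))
      = -∑ i, (ℓ' (-(Y i) * nnOut φ θstar.1 θstar.2 (X i)) * Y i * θstar.1 j) * D i := by
    rw [← Finset.sum_neg_distrib]
    refine Finset.sum_congr rfl fun i _ => ?_
    rw [hr0 i]
    ring
  rw [hsum_eq] at hpos
  have hring : (1/2) * lam j * (2 * nnDot (θstar.2 j) u) = lam j * nnDot (θstar.2 j) u := by ring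
  linarith

theorem local_min_first_order_condition
    {d m n : ℕ} (φ : ℕ → Vec d)
    (X : Fin n → Vec d) (Y : Fin n → ℝ)
    (hY : ∀ i, Y i = 1 ∨ Y i = -1)
    (ℓ ℓ' : ℝ → ℝ) (hderiv : ∀ z, HasDerivAt ℓ (ℓ' z) z)
    (lam : Fin m → ℝ) (hlam : ∀ j, 0 < lam j)
    (θstar : (Fin m → ℝ) × (Fin m → Vec d))
    (hmin : IsLocalMin (nnLoss ℓ φ X Y lam) θstar) :
    ∀ j : Fin m, ∃ μ : Fin n → ℝ, (∀ i, μ i ∈ Set.Icc (0 : ℝ) 1) ∧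
      (lam j • θstar.2 j
          - ∑ i, (ℓ' (-(Y i) * nnOut φ θstar.1 θstar.2 (X i)) * Y i * θstar.1 j *
              (if 0 < nnDot (θstar.2 j) (nnHad (X i) (φ (j : ℕ))) then (1 : ℝ) else 0)) •
            nnHad (X i) (φ (j : ℕ)))
        = ∑ i, ((if nnDot (θstar.2 j) (nnHad (X i) (φ (j : ℕ))) = 0 then μ i else 0) *
            ℓ' (-(Y i) * nnOut φ θstar.1 θstar.2 (X i)) * Y i * θstar.1 j) •
            nnHad (X i) (φ (j : ℕ)) := by
  intro j
  have key : ∀ u : Vec d,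
      (∑ i, (fun i => ℓ' (-(Y i) * nnOut φ θstar.1 θstar.2 (X i)) * Y i * θstar.1 j) i *
        (if 0 < nnDot (θstar.2 j) ((fun i => nnHad (X i) (φ (j : ℕ))) i)
         then nnDot u ((fun i => nnHad (X i) (φ (j : ℕ))) i)
         else if nnDot (θstar.2 j) ((fun i => nnHad (X i) (φ (j : ℕ))) i) = 0
              then max (nnDot u ((fun i => nnHad (X i) (φ (j : ℕ))) i)) 0 else 0))
      ≤ lam j * nnDot (θstar.2 j) u :=
    fun u => aux_keyA φ X Y ℓ ℓ' hderiv lam θstar hmin j u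
  obtain ⟨μ, hμ, heq⟩ := aux_subgrad (fun i => nnHad (X i) (φ (j : ℕ)))
      (fun i => ℓ' (-(Y i) * nnOut φ θstar.1 θstar.2 (X i)) * Y i * θstar.1 j)
      (lam j) (θstar.2 j) key
  refine ⟨μ, hμ, heq.trans (Finset.sum_congr rfl fun i _ => ?_)⟩
  congr 1
  ring
end
end

section
/- Assume m ≥ n+1, ℓ differentiable, and ‖x_i‖₂ ≤ 1 for all i. There exists a set C ⊂ ℝ^m of Lebesgue measure zero (depending on the dataset) such that for every coefficient vector λ = (λ_1,…,λ_m) with positive entries and λ ∉ C, at every local minimum θ* of the regularized empirical loss L_n(·;λ), the network has an inactive neuron: there exists j ∈ [m] with a_j* = 0 and w_j* = 0. -/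
open scoped BigOperators
open MeasureTheory

noncomputable section

/-! ### Auxiliary development for the proof -/

open scoped RealInnerProductSpace

namespace NNaux

variable {d m n : ℕ}

lemma nnDot_smul_left (c : ℝ) (u v : Vec d) : nnDot (c • u) v = c * nnDot u v := by
  simp [nnDot, Finset.mul_sum, mul_assoc]

lemma nnDot_add_left (u v x : Vec d) : nnDot (u + v) x = nnDot u x + nnDot v x := by
  simp [nnDot, add_mul, Finset.sum_add_distrib]

lemma nnDot_eq_inner (u v : Vec d) : nnDot u v = ⟪u, v⟫ := by
  simp [nnDot, PiLp.inner_apply, RCLike.inner_apply, mul_comm]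

lemma nnRelu_mul (c z : ℝ) (hc : 0 ≤ c) : nnRelu (c * z) = c * nnRelu z := by
  unfold nnRelu
  rcases le_or_gt z 0 with hz | hz
  · rw [max_eq_right hz, max_eq_right (mul_nonpos_of_nonneg_of_nonpos hc hz), mul_zero]
  · rw [max_eq_left hz.le, max_eq_left (mul_nonneg hc hz.le)]

lemma reg_update (lam a : Fin m → ℝ) (w : Fin m → Vec d) (A : ℝ) (W : Vec d) (j : Fin m) :
    ∑ j', lam j' * ((Function.update a j A j') ^ 2 + ‖Function.update w j W j'‖ ^ 2)
      = ∑ j', lam j' * ((a j') ^ 2 + ‖w j'‖ ^ 2)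
        + lam j * ((A ^ 2 + ‖W‖ ^ 2) - ((a j) ^ 2 + ‖w j‖ ^ 2)) := by
  have : ∀ j' ∈ Finset.univ,
      lam j' * ((Function.update a j A j') ^ 2 + ‖Function.update w j W j'‖ ^ 2)
      = lam j' * ((a j') ^ 2 + ‖w j'‖ ^ 2)
        + (if j' = j then lam j * ((A ^ 2 + ‖W‖ ^ 2) - ((a j) ^ 2 + ‖w j‖ ^ 2)) else 0) := by
    intro j' _
    rcases eq_or_ne j' j with rfl | hne
    · simp [Function.update_self]; ring
    · simp [Function.update_of_ne hne, hne]
  rw [Finset.sum_congr rfl this, Finset.sum_add_distrib, Finset.sum_ite_eq' Finset.univ j]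
  simp

lemma reg_updateW (lam a : Fin m → ℝ) (w : Fin m → Vec d) (W : Vec d) (j : Fin m) :
    ∑ j', lam j' * ((a j') ^ 2 + ‖Function.update w j W j'‖ ^ 2)
      = ∑ j', lam j' * ((a j') ^ 2 + ‖w j'‖ ^ 2) + lam j * (‖W‖ ^ 2 - ‖w j‖ ^ 2) := by
  have : ∀ j' ∈ Finset.univ,
      lam j' * ((a j') ^ 2 + ‖Function.update w j W j'‖ ^ 2)
      = lam j' * ((a j') ^ 2 + ‖w j'‖ ^ 2)
        + (if j' = j then lam j * (‖W‖ ^ 2 - ‖w j‖ ^ 2) else 0) := by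
    intro j' _
    rcases eq_or_ne j' j with rfl | hne
    · simp [Function.update_self]; ring
    · simp [Function.update_of_ne hne, hne]
  rw [Finset.sum_congr rfl this, Finset.sum_add_distrib, Finset.sum_ite_eq' Finset.univ j]
  simp

lemma out_update (φ : ℕ → Vec d) (a : Fin m → ℝ) (w : Fin m → Vec d) (A : ℝ) (W : Vec d)
    (j : Fin m) (x : Vec d) :
    nnOut φ (Function.update a j A) (Function.update w j W) x
      = nnOut φ a w x + (A * nnRelu (nnDot W (nnHad x (φ (j : ℕ))))
          - a j * nnRelu (nnDot (w j) (nnHad x (φ (j : ℕ))))) := by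
  unfold nnOut
  have : ∀ j' ∈ Finset.univ,
      Function.update a j A j' * nnRelu (nnDot (Function.update w j W j') (nnHad x (φ (j' : ℕ))))
      = a j' * nnRelu (nnDot (w j') (nnHad x (φ (j' : ℕ))))
        + (if j' = j then A * nnRelu (nnDot W (nnHad x (φ (j : ℕ))))
            - a j * nnRelu (nnDot (w j) (nnHad x (φ (j : ℕ)))) else 0) := by
    intro j' _
    rcases eq_or_ne j' j with rfl | hne
    · simp
    · simp [Function.update_of_ne hne, hne]
  rw [Finset.sum_congr rfl this, Finset.sum_add_distrib, Finset.sum_ite_eq' Finset.univ j]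
  simp

/-- The image of a Lipschitz map from `ℝⁿ` to `ℝᵐ`, `n < m`, is Lebesgue null. -/
lemma null_range {n m : ℕ} (hm : n + 1 ≤ m) (Ψ : (Fin n → ℝ) → (Fin m → ℝ))
    (K : NNReal) (hΨ : LipschitzWith K Ψ) : volume (Set.range Ψ) = 0 := by
  have hn : n < m := hm
  have hlip1 : LipschitzWith 1
      (fun h : Fin m → ℝ => (fun i : Fin n => h (Fin.castLE hn.le i))) := by
    apply LipschitzWith.of_dist_le_mul
    intro x y
    rw [NNReal.coe_one, one_mul]
    refine (dist_pi_le_iff dist_nonneg).2 fun i => dist_le_pi_dist x y _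
  set Φ : (Fin m → ℝ) → (Fin m → ℝ) := fun h => Ψ (fun i => h (Fin.castLE hn.le i)) with hΦ
  have hΦlip : LipschitzWith (K * 1) Φ := hΨ.comp hlip1
  set Z : Set (Fin m → ℝ) := {h | h ⟨n, hn⟩ = 0} with hZ
  have hZ0 : volume Z = 0 := by
    rw [volume_pi]
    exact Measure.pi_hyperplane _ _ 0
  have hsub : Set.range Ψ ⊆ Φ '' Z := by
    rintro - ⟨g, rfl⟩
    refine ⟨fun k => if hk : (k : ℕ) < n then g ⟨k, hk⟩ else 0, by simp [hZ], ?_⟩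
    simp only [hΦ]
    congr 1
    funext i
    simp [Fin.castLE, i.isLt]
  have hH : (μH[(m : ℝ)] : Measure (Fin m → ℝ)) = volume := by
    simpa using hausdorffMeasure_pi_real (ι := Fin m)
  refine measure_mono_null hsub ?_
  rw [← hH]
  refine le_antisymm ?_ (zero_le)
  calc μH[(m:ℝ)] (Φ '' Z) ≤ (K*1 : NNReal) ^ (m:ℝ) * μH[(m:ℝ)] Z :=
        hΦlip.hausdorffMeasure_image_le (by positivity) Z
    _ = 0 := by rw [hH, hZ0, mul_zero]

/-- span of boundary data for neuron `j` under boundary pattern `B` -/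
def Sp (φ : ℕ → Vec d) (X : Fin n → Vec d) (B : Fin m → Fin n → Bool) (j : Fin m) :
    Submodule ℝ (Vec d) :=
  Submodule.span ℝ {v | ∃ i, B j i = true ∧ v = nnHad (X i) (φ (j : ℕ))}

/-- the candidate map whose ranges cover all possible `λ` at bad local minima -/
def Phi (φ : ℕ → Vec d) (X : Fin n → Vec d) (P B : Fin m → Fin n → Bool)
    (g : Fin n → ℝ) : Fin m → ℝ :=
  fun j => ‖(Submodule.orthogonalProjectionOnto ((Sp φ X B j)ᗮ)
      (∑ i, (if P j i then g i else 0) • nnHad (X i) (φ (j : ℕ))) : Vec d)‖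

lemma phi_lip (φ : ℕ → Vec d) (X : Fin n → Vec d) (P B : Fin m → Fin n → Bool) :
    LipschitzWith (∑ i : Fin n, Finset.univ.sup fun j : Fin m => ‖nnHad (X i) (φ (j : ℕ))‖₊)
      (Phi φ X P B) := by
  classical
  set K : NNReal := ∑ i : Fin n, Finset.univ.sup fun j : Fin m => ‖nnHad (X i) (φ (j : ℕ))‖₊
    with hK
  apply LipschitzWith.of_dist_le_mul
  intro g g'
  refine (dist_pi_le_iff (by positivity)).2 fun j => ?_
  set u := ∑ i, (if P j i then g i else 0) • nnHad (X i) (φ (j : ℕ)) with hu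
  set u' := ∑ i, (if P j i then g' i else 0) • nnHad (X i) (φ (j : ℕ)) with hu'
  have step1 : dist (Phi φ X P B g j) (Phi φ X P B g' j) ≤ ‖u - u'‖ := by
    rw [Phi, Real.dist_eq]
    calc |‖(Submodule.orthogonalProjectionOnto ((Sp φ X B j)ᗮ) u : Vec d)‖
          - ‖(Submodule.orthogonalProjectionOnto ((Sp φ X B j)ᗮ) u' : Vec d)‖|
        ≤ ‖(Submodule.orthogonalProjectionOnto ((Sp φ X B j)ᗮ) u : Vec d)
            - (Submodule.orthogonalProjectionOnto ((Sp φ X B j)ᗮ) u' : Vec d)‖ := abs_norm_sub_norm_le _ _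
      _ = ‖Submodule.orthogonalProjectionOnto ((Sp φ X B j)ᗮ) (u - u')‖ := by
            rw [map_sub]; rfl
      _ ≤ ‖(Submodule.orthogonalProjectionOnto ((Sp φ X B j)ᗮ) : Vec d →L[ℝ] _)‖ * ‖u - u'‖ :=
            ContinuousLinearMap.le_opNorm _ _
      _ ≤ 1 * ‖u - u'‖ := by
            gcongr
            exact Submodule.orthogonalProjectionOnto_norm_le _
      _ = ‖u - u'‖ := one_mul _
  have step2 : ‖u - u'‖ ≤ K * dist g g' := by
    have huu : u - u' = ∑ i, (if P j i then g i - g' i else 0) • nnHad (X i) (φ (j : ℕ)) := by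
      rw [hu, hu', ← Finset.sum_sub_distrib]
      refine Finset.sum_congr rfl fun i _ => ?_
      by_cases hp : P j i <;> simp [hp, sub_smul]
    rw [huu]
    calc ‖∑ i, (if P j i then g i - g' i else 0) • nnHad (X i) (φ (j : ℕ))‖
        ≤ ∑ i, ‖(if P j i then g i - g' i else 0) • nnHad (X i) (φ (j : ℕ))‖ :=
          norm_sum_le _ _
      _ ≤ ∑ i : Fin n, dist g g' *
            ((Finset.univ.sup fun j : Fin m => ‖nnHad (X i) (φ (j : ℕ))‖₊ : NNReal) : ℝ) := by
          refine Finset.sum_le_sum fun i _ => ?_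
          rw [norm_smul]
          have h1 : ‖(if P j i then g i - g' i else 0 : ℝ)‖ ≤ dist g g' := by
            by_cases hp : P j i
            · simp only [hp, if_true, Real.norm_eq_abs]
              rw [← Real.dist_eq]
              exact dist_le_pi_dist g g' i
            · simp [hp, dist_nonneg]
          have h2 : ‖nnHad (X i) (φ (j : ℕ))‖
              ≤ ((Finset.univ.sup fun j : Fin m => ‖nnHad (X i) (φ (j : ℕ))‖₊ : NNReal) : ℝ) := by
            have := Finset.le_sup (f := fun j : Fin m => ‖nnHad (X i) (φ (j : ℕ))‖₊)
              (Finset.mem_univ j)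
            exact_mod_cast this
          exact mul_le_mul h1 h2 (norm_nonneg _) dist_nonneg
      _ = K * dist g g' := by
          rw [← Finset.mul_sum, mul_comm, hK]
          push_cast
          rfl
  exact step1.trans step2

variable (φ : ℕ → Vec d) (X : Fin n → Vec d) (Y : Fin n → ℝ) (ℓ ℓ' : ℝ → ℝ) (lam : Fin m → ℝ)

lemma localmin_comp {a : Fin m → ℝ} {w : Fin m → Vec d}
    (hmin : IsLocalMin (nnLoss ℓ φ X Y lam) (a, w))
    {c : ℝ → (Fin m → ℝ) × (Fin m → Vec d)} (hc : ContinuousAt c 0) (hc0 : c 0 = (a, w)) :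
    IsLocalMin (nnLoss ℓ φ X Y lam ∘ c) 0 := by
  have ht : Filter.Tendsto c (nhds 0) (nhds (a, w)) := by
    rw [← hc0]; exact hc.tendsto
  have := ht.eventually hmin
  simpa [IsLocalMin, IsMinFilter, hc0] using this

/-- Balancedness at a local minimum. -/
lemma balance (a : Fin m → ℝ) (w : Fin m → Vec d)
    (hmin : IsLocalMin (nnLoss ℓ φ X Y lam) (a, w)) (j : Fin m) :
    lam j * ((a j) ^ 2 - ‖w j‖ ^ 2) = 0 := by
  classical
  set c : ℝ → (Fin m → ℝ) × (Fin m → Vec d) := fun t =>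
    (Function.update a j (a j * Real.exp t), Function.update w j (Real.exp (-t) • w j)) with hc
  have hc0 : c 0 = (a, w) := by
    simp [hc]
  have hccont : ContinuousAt c 0 := by
    apply ContinuousAt.prodMk
    · apply continuousAt_pi.2
      intro k
      rcases eq_or_ne k j with rfl | hne
      · simp only [Function.update_self]
        exact (continuousAt_const.mul Real.continuous_exp.continuousAt)
      · simp only [Function.update_of_ne hne]
        exact continuousAt_const
    · apply continuousAt_pi.2
      intro k
      rcases eq_or_ne k j with rfl | hne
      · simp only [Function.update_self]
        exact ((Real.continuous_exp.comp continuous_neg).smul continuous_const).continuousAt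
      · simp only [Function.update_of_ne hne]
        exact continuousAt_const
  have hmin' := localmin_comp φ X Y ℓ lam hmin hccont hc0
  set G : ℝ → ℝ := fun t =>
    (∑ i, ℓ (-(Y i) * nnOut φ a w (X i)))
      + (1 / 2) * (∑ j', lam j' * ((a j') ^ 2 + ‖w j'‖ ^ 2)
        + lam j * (((a j * Real.exp t) ^ 2 + (Real.exp (-t)) ^ 2 * ‖w j‖ ^ 2)
            - ((a j) ^ 2 + ‖w j‖ ^ 2))) with hG
  have hfun : nnLoss ℓ φ X Y lam ∘ c = G := by
    funext t
    simp only [Function.comp_apply, nnLoss, hc, hG]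
    have hout : ∀ x : Vec d,
        nnOut φ (Function.update a j (a j * Real.exp t))
          (Function.update w j (Real.exp (-t) • w j)) x = nnOut φ a w x := by
      intro x
      rw [out_update, nnDot_smul_left, nnRelu_mul _ _ (Real.exp_nonneg _)]
      rw [show a j * Real.exp t * (Real.exp (-t) * nnRelu (nnDot (w j) (nnHad x (φ (j:ℕ)))))
            = (Real.exp t * Real.exp (-t)) * (a j * nnRelu (nnDot (w j) (nnHad x (φ (j:ℕ)))))
          by ring]
      rw [← Real.exp_add]
      simp
    rw [reg_update]
    simp only [hout]
    rw [norm_smul, Real.norm_eq_abs, Real.abs_exp, mul_pow]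
    ring
  rw [hfun] at hmin'
  have hD : HasDerivAt G ((1/2) * (lam j * ((2 * (a j * Real.exp 0) * (a j * (Real.exp 0 * 1)))
      + ((2 * Real.exp (-0) * (Real.exp (-0) * (-1))) * ‖w j‖ ^ 2)))) 0 := by
    apply HasDerivAt.const_add
    apply HasDerivAt.const_mul
    apply HasDerivAt.const_add
    apply HasDerivAt.const_mul
    have h1 : HasDerivAt (fun t => (a j * Real.exp t) ^ 2)
        (2 * (a j * Real.exp 0) * (a j * (Real.exp 0 * 1))) 0 := by
      have : HasDerivAt (fun t => a j * Real.exp t) (a j * (Real.exp 0 * 1)) 0 :=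
        ((Real.hasDerivAt_exp 0).comp 0 (hasDerivAt_id (0:ℝ))).const_mul _
      simpa using this.fun_pow 2
    have h2 : HasDerivAt (fun t => (Real.exp (-t)) ^ 2 * ‖w j‖ ^ 2)
        ((2 * Real.exp (-0) * (Real.exp (-0) * (-1))) * ‖w j‖ ^ 2) 0 := by
      have hneg : HasDerivAt (fun t : ℝ => -t) (-1) 0 := (hasDerivAt_id 0).neg
      have : HasDerivAt (fun t => Real.exp (-t)) (Real.exp (-0) * (-1)) 0 :=
        (Real.hasDerivAt_exp (-0)).comp 0 hneg
      simpa using (this.pow 2).mul_const _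
    exact (h1.add h2).sub_const _
  have := hmin'.hasDerivAt_eq_zero hD
  simp only [Real.exp_zero, neg_zero] at this
  nlinarith [this]

/-- First-order condition in a direction `h` orthogonal to the boundary data of neuron `j`. -/
lemma wdir (hderiv : ∀ z, HasDerivAt ℓ (ℓ' z) z) (a : Fin m → ℝ) (w : Fin m → Vec d)
    (hmin : IsLocalMin (nnLoss ℓ φ X Y lam) (a, w)) (j : Fin m) (h : Vec d)
    (hB : ∀ i, nnDot (w j) (nnHad (X i) (φ (j:ℕ))) = 0 → nnDot h (nnHad (X i) (φ (j:ℕ))) = 0) :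
    (∑ i, ℓ' (-(Y i) * nnOut φ a w (X i)) * (-(Y i) * (a j *
        (if 0 < nnDot (w j) (nnHad (X i) (φ (j:ℕ))) then nnDot h (nnHad (X i) (φ (j:ℕ)))
          else 0))))
      + lam j * nnDot (w j) h = 0 := by
  classical
  set xt : Fin n → Vec d := fun i => nnHad (X i) (φ (j:ℕ)) with hxt
  set dt : Fin n → ℝ := fun i => nnDot (w j) (xt i) with hdt
  set q : Fin n → ℝ := fun i => if 0 < dt i then nnDot h (xt i) else 0 with hq
  set F : Fin n → ℝ := fun i => nnOut φ a w (X i) with hF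
  set c : ℝ → (Fin m → ℝ) × (Fin m → Vec d) := fun t =>
    (a, Function.update w j (w j + t • h)) with hc
  have hc0 : c 0 = (a, w) := by simp [hc]
  have hccont : ContinuousAt c 0 := by
    apply ContinuousAt.prodMk
    · exact continuousAt_const
    · apply continuousAt_pi.2
      intro k
      rcases eq_or_ne k j with rfl | hne
      · simp only [Function.update_self]
        exact (continuous_const.add ((continuous_id).smul continuous_const)).continuousAt
      · simp only [Function.update_of_ne hne]
        exact continuousAt_const
  have hmin' := localmin_comp φ X Y ℓ lam hmin hccont hc0
  have hev : ∀ᶠ t : ℝ in nhds 0, ∀ i,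
      nnRelu (nnDot (w j + t • h) (xt i)) = nnRelu (dt i) + t * q i := by
    rw [Filter.eventually_all]
    intro i
    have hlin : ∀ t : ℝ, nnDot (w j + t • h) (xt i) = dt i + t * nnDot h (xt i) := by
      intro t; rw [nnDot_add_left, nnDot_smul_left]
    rcases lt_trichotomy (dt i) 0 with hneg | hzero | hpos
    · have hcont : Filter.Tendsto (fun t : ℝ => dt i + t * nnDot h (xt i)) (nhds 0)
          (nhds (dt i)) := by
        have : Filter.Tendsto (fun t : ℝ => dt i + t * nnDot h (xt i)) (nhds 0)
            (nhds (dt i + 0 * nnDot h (xt i))) :=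
          (tendsto_const_nhds.add ((continuous_id.mul continuous_const).tendsto 0))
        simpa using this
      filter_upwards [hcont.eventually (gt_mem_nhds hneg)] with t ht
      rw [hlin t]
      have h1 : nnRelu (dt i + t * nnDot h (xt i)) = 0 := max_eq_right (le_of_lt ht)
      have h2 : nnRelu (dt i) = 0 := max_eq_right (le_of_lt hneg)
      rw [h1, h2, hq]
      simp [hneg.not_gt]
    · filter_upwards with t
      rw [hlin t, hzero, hB i hzero]
      simp [nnRelu, hq, hzero]
    · have hcont : Filter.Tendsto (fun t : ℝ => dt i + t * nnDot h (xt i)) (nhds 0)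
          (nhds (dt i)) := by
        have : Filter.Tendsto (fun t : ℝ => dt i + t * nnDot h (xt i)) (nhds 0)
            (nhds (dt i + 0 * nnDot h (xt i))) :=
          (tendsto_const_nhds.add ((continuous_id.mul continuous_const).tendsto 0))
        simpa using this
      filter_upwards [hcont.eventually (lt_mem_nhds hpos)] with t ht
      rw [hlin t]
      have h1 : nnRelu (dt i + t * nnDot h (xt i)) = dt i + t * nnDot h (xt i) :=
        max_eq_left (le_of_lt ht)
      have h2 : nnRelu (dt i) = dt i := max_eq_left (le_of_lt hpos)
      rw [h1, h2, hq]
      simp [hpos]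
  set G : ℝ → ℝ := fun t =>
    (∑ i, ℓ (-(Y i) * (F i + a j * (t * q i))))
      + (1 / 2) * (∑ j', lam j' * ((a j') ^ 2 + ‖w j'‖ ^ 2)
        + lam j * (‖w j + t • h‖ ^ 2 - ‖w j‖ ^ 2)) with hG
  have hevL : (nnLoss ℓ φ X Y lam ∘ c) =ᶠ[nhds 0] G := by
    filter_upwards [hev] with t ht
    simp only [Function.comp_apply, nnLoss, hc, hG]
    have hout : ∀ i, nnOut φ a (Function.update w j (w j + t • h)) (X i)
        = F i + a j * (t * q i) := by
      intro i
      conv_lhs => rw [← Function.update_eq_self j a]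
      rw [out_update]
      rw [show nnHad (X i) (φ (j:ℕ)) = xt i from rfl,
        show nnDot (w j) (xt i) = dt i from rfl, ht i]
      simp only [hF]
      ring
    simp only [hout]
    rw [reg_updateW]
  have hnorm : HasDerivAt (fun t : ℝ => ‖w j + t • h‖ ^ 2) (2 * nnDot (w j) h) 0 := by
    have heq : (fun t : ℝ => ‖w j + t • h‖ ^ 2)
        = fun t : ℝ => ‖w j‖ ^ 2 + 2 * (t * nnDot (w j) h) + t ^ 2 * ‖h‖ ^ 2 := by
      funext t
      rw [norm_add_sq_real, real_inner_smul_right, nnDot_eq_inner, norm_smul,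
        Real.norm_eq_abs, mul_pow, sq_abs]
    rw [heq]
    have h1 : HasDerivAt (fun t : ℝ => ‖w j‖ ^ 2 + 2 * (t * nnDot (w j) h))
        (2 * nnDot (w j) h) 0 := by
      have := ((hasDerivAt_id (0:ℝ)).mul_const (nnDot (w j) h)).const_mul 2
      simpa using this.const_add (‖w j‖ ^ 2)
    have h2 : HasDerivAt (fun t : ℝ => t ^ 2 * ‖h‖ ^ 2) 0 0 := by
      have := (hasDerivAt_pow 2 (0:ℝ)).mul_const (‖h‖ ^ 2)
      simpa using this
    simpa using h1.fun_add h2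
  have hfit : ∀ i : Fin n, HasDerivAt (fun t : ℝ => ℓ (-(Y i) * (F i + a j * (t * q i))))
      (ℓ' (-(Y i) * F i) * (-(Y i) * (a j * q i))) 0 := by
    intro i
    have hin : HasDerivAt (fun t : ℝ => -(Y i) * (F i + a j * (t * q i)))
        (-(Y i) * (a j * q i)) 0 := by
      have := (((hasDerivAt_id (0:ℝ)).mul_const (q i)).const_mul (a j)).const_add (F i)
      simpa using this.const_mul (-(Y i))
    have hcomp := (hderiv (-(Y i) * (F i + a j * ((0:ℝ) * q i)))).comp 0 hin
    simpa [Function.comp_def] using hcomp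
  have hD : HasDerivAt G
      ((∑ i, ℓ' (-(Y i) * F i) * (-(Y i) * (a j * q i)))
        + (1 / 2) * (lam j * (2 * nnDot (w j) h))) 0 := by
    apply HasDerivAt.add
    · exact HasDerivAt.fun_sum (fun i _ => hfit i)
    · apply HasDerivAt.const_mul
      have h2 := (hnorm.sub_const (‖w j‖ ^ 2)).const_mul (lam j)
      exact h2.const_add _
  have hD' : HasDerivAt (nnLoss ℓ φ X Y lam ∘ c)
      ((∑ i, ℓ' (-(Y i) * F i) * (-(Y i) * (a j * q i)))
        + (1 / 2) * (lam j * (2 * nnDot (w j) h))) 0 :=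
    hD.congr_of_eventuallyEq hevL
  have hzero := hmin'.hasDerivAt_eq_zero hD'
  have : (∑ i, ℓ' (-(Y i) * F i) * (-(Y i) * (a j * q i))) + lam j * nnDot (w j) h = 0 := by
    linarith [hzero]
  simpa [hF, hq, hdt, hxt] using this

/-- If neuron `j` is active at a local minimum, then `lam j` is a value of `Phi`. -/
lemma key (a : Fin m → ℝ) (w : Fin m → Vec d) (j : Fin m)
    (hwd : ∀ h : Vec d,
      (∀ i, nnDot (w j) (nnHad (X i) (φ (j:ℕ))) = 0 → nnDot h (nnHad (X i) (φ (j:ℕ))) = 0) →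
      (∑ i, ℓ' (-(Y i) * nnOut φ a w (X i)) * (-(Y i) * (a j *
          (if 0 < nnDot (w j) (nnHad (X i) (φ (j:ℕ))) then nnDot h (nnHad (X i) (φ (j:ℕ)))
            else 0))))
        + lam j * nnDot (w j) h = 0)
    (hane : a j ≠ 0) (hbal : (a j) ^ 2 = ‖w j‖ ^ 2) (hlam : 0 < lam j) :
    lam j = Phi φ X (fun j' i => decide (0 < nnDot (w j') (nnHad (X i) (φ (j':ℕ)))))
      (fun j' i => decide (nnDot (w j') (nnHad (X i) (φ (j':ℕ))) = 0))
      (fun i => Y i * ℓ' (-(Y i) * nnOut φ a w (X i))) j := by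
  classical
  set P : Fin m → Fin n → Bool :=
    fun j' i => decide (0 < nnDot (w j') (nnHad (X i) (φ (j':ℕ)))) with hP
  set B : Fin m → Fin n → Bool :=
    fun j' i => decide (nnDot (w j') (nnHad (X i) (φ (j':ℕ))) = 0) with hB
  set g : Fin n → ℝ := fun i => Y i * ℓ' (-(Y i) * nnOut φ a w (X i)) with hg
  set KS : Submodule ℝ (Vec d) := (Sp φ X B j)ᗮ with hKS
  set v : Vec d := ∑ i, (if P j i then g i else 0) • nnHad (X i) (φ (j : ℕ)) with hv
  have hwmem : w j ∈ KS := by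
    rw [hKS, Submodule.mem_orthogonal]
    intro u hu
    refine Submodule.span_induction ?_ ?_ ?_ ?_ hu
    · rintro x ⟨i, hBi, rfl⟩
      have hdot : nnDot (w j) (nnHad (X i) (φ (j:ℕ))) = 0 := by
        simpa [hB] using hBi
      rw [real_inner_comm, ← nnDot_eq_inner]
      exact hdot
    · simp
    · intro x y _ _ hx hy
      rw [inner_add_left, hx, hy, add_zero]
    · intro r x _ hx
      rw [real_inner_smul_left, hx, mul_zero]
  have hqorth : ∀ h ∈ KS, ⟪lam j • w j - a j • v, h⟫ = 0 := by
    intro h hh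
    have hBcond : ∀ i, nnDot (w j) (nnHad (X i) (φ (j:ℕ))) = 0 →
        nnDot h (nnHad (X i) (φ (j:ℕ))) = 0 := by
      intro i hi
      have hxm : nnHad (X i) (φ (j:ℕ)) ∈ Sp φ X B j :=
        Submodule.subset_span ⟨i, by simp [hB, hi], rfl⟩
      have h0 : ⟪nnHad (X i) (φ (j:ℕ)), h⟫ = 0 := by
        rw [hKS, Submodule.mem_orthogonal] at hh
        exact hh _ hxm
      rw [nnDot_eq_inner, real_inner_comm]
      exact h0
    have heq := hwd h hBcond
    have hsum : (∑ i, ℓ' (-(Y i) * nnOut φ a w (X i)) * (-(Y i) * (a j *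
        (if 0 < nnDot (w j) (nnHad (X i) (φ (j:ℕ))) then nnDot h (nnHad (X i) (φ (j:ℕ)))
          else 0)))) = -(a j * ⟪v, h⟫) := by
      rw [hv, sum_inner, Finset.mul_sum, ← Finset.sum_neg_distrib]
      refine Finset.sum_congr rfl fun i _ => ?_
      by_cases hd : 0 < nnDot (w j) (nnHad (X i) (φ (j:ℕ)))
      · simp only [hd, if_true, hP, decide_eq_true_eq, real_inner_smul_left]
        rw [show (nnDot h (nnHad (X i) (φ (j:ℕ))) : ℝ)
            = ⟪nnHad (X i) (φ (j:ℕ)), h⟫ from by rw [nnDot_eq_inner, real_inner_comm]]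
        rw [hg]
        ring
      · simp [hd, hP]
    rw [inner_sub_left, real_inner_smul_left, real_inner_smul_left]
    have hwh : nnDot (w j) h = ⟪w j, h⟫ := nnDot_eq_inner _ _
    rw [hsum, hwh] at heq
    linarith
  have hqmem : lam j • w j - a j • v ∈ KSᗮ := by
    rw [Submodule.mem_orthogonal]
    intro u hu
    rw [real_inner_comm]
    exact hqorth u hu
  have hproj0 : Submodule.orthogonalProjectionOnto KS (lam j • w j - a j • v) = 0 :=
    Submodule.orthogonalProjectionOnto_apply_of_mem_orthogonal hqmem
  have hlin : lam j • Submodule.orthogonalProjectionOnto KS (w j) - a j • Submodule.orthogonalProjectionOnto KS v = 0 := by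
    rw [← _root_.map_smul, ← _root_.map_smul, ← map_sub]
    exact hproj0
  have h1 : a j • Submodule.orthogonalProjectionOnto KS v = lam j • Submodule.orthogonalProjectionOnto KS (w j) :=
    (sub_eq_zero.mp hlin).symm
  have h2 : |a j| * ‖Submodule.orthogonalProjectionOnto KS v‖ = lam j * ‖Submodule.orthogonalProjectionOnto KS (w j)‖ := by
    have := congrArg norm h1
    rw [norm_smul, norm_smul, Real.norm_eq_abs, Real.norm_eq_abs, abs_of_pos hlam] at this
    exact this
  have hprojw : ‖Submodule.orthogonalProjectionOnto KS (w j)‖ = ‖w j‖ := by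
    have hcoe : (Submodule.orthogonalProjectionOnto KS (w j) : Vec d) = w j :=
      Submodule.starProjection_eq_self_iff.2 hwmem
    calc ‖Submodule.orthogonalProjectionOnto KS (w j)‖
        = ‖(Submodule.orthogonalProjectionOnto KS (w j) : Vec d)‖ := rfl
      _ = ‖w j‖ := by rw [hcoe]
  have habs : |a j| = ‖w j‖ := by
    have h3 : |a j| ^ 2 = ‖w j‖ ^ 2 := by rw [sq_abs]; exact hbal
    exact (sq_eq_sq₀ (abs_nonneg _) (norm_nonneg _)).mp h3
  rw [hprojw, ← habs] at h2
  have hcancel : ‖Submodule.orthogonalProjectionOnto KS v‖ = lam j := by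
    have hane' : |a j| ≠ 0 := abs_ne_zero.2 hane
    exact mul_left_cancel₀ hane' (h2.trans (mul_comm _ _))
  rw [Phi]
  rw [show ‖(Submodule.orthogonalProjectionOnto KS v : Vec d)‖ = ‖Submodule.orthogonalProjectionOnto KS v‖ from rfl]
  exact hcancel.symm

end NNaux

theorem local_min_has_inactive_neuron
    {d m n : ℕ} (φ : ℕ → Vec d)
    (X : Fin n → Vec d) (Y : Fin n → ℝ)
    (hY : ∀ i, Y i = 1 ∨ Y i = -1)
    (hX : ∀ i, ‖X i‖ ≤ 1)
    (hm : n + 1 ≤ m)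
    (ℓ ℓ' : ℝ → ℝ) (hderiv : ∀ z, HasDerivAt ℓ (ℓ' z) z) :
    ∃ C : Set (Fin m → ℝ), MeasureTheory.volume C = 0 ∧
      ∀ lam : Fin m → ℝ, (∀ j, 0 < lam j) → lam ∉ C →
        ∀ θstar : (Fin m → ℝ) × (Fin m → Vec d),
          IsLocalMin (nnLoss ℓ φ X Y lam) θstar →
            ∃ j : Fin m, θstar.1 j = 0 ∧ θstar.2 j = 0 := by
  classical
  refine ⟨⋃ PB : (Fin m → Fin n → Bool) × (Fin m → Fin n → Bool),
      Set.range (NNaux.Phi φ X PB.1 PB.2), ?_, ?_⟩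
  · exact measure_iUnion_null fun PB =>
      NNaux.null_range hm _ _ (NNaux.phi_lip φ X PB.1 PB.2)
  · intro lam hpos hC θstar hmin
    by_contra hno
    push_neg at hno
    obtain ⟨a, w⟩ := θstar
    have hbal2 : ∀ j, (a j) ^ 2 = ‖w j‖ ^ 2 := by
      intro j
      have hb := NNaux.balance φ X Y ℓ lam a w hmin j
      rcases mul_eq_zero.mp hb with h | h
      · exact absurd h (hpos j).ne'
      · linarith
    have hane : ∀ j, a j ≠ 0 := by
      intro j haj
      have h1 : ‖w j‖ ^ 2 = 0 := by rw [← hbal2 j, haj]; ring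
      have h2 : w j = 0 := by
        have := pow_eq_zero_iff (n := 2) (by norm_num) |>.mp h1
        exact norm_eq_zero.mp this
      exact (hno j) haj h2
    have hkey : lam = NNaux.Phi φ X
        (fun j' i => decide (0 < nnDot (w j') (nnHad (X i) (φ (j':ℕ)))))
        (fun j' i => decide (nnDot (w j') (nnHad (X i) (φ (j':ℕ))) = 0))
        (fun i => Y i * ℓ' (-(Y i) * nnOut φ a w (X i))) := by
      funext j
      exact NNaux.key φ X Y ℓ' lam a w j
        (fun h hB => NNaux.wdir φ X Y ℓ ℓ' lam hderiv a w hmin j h hB)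
        (hane j) (hbal2 j) (hpos j)
    exact hC (Set.mem_iUnion.2 ⟨(_, _), ⟨_, hkey.symm⟩⟩)
end
end

section
/- Assume ℓ is differentiable with 1-Lipschitz derivative. If θ* is a local minimum of the regularized empirical loss L_n(·;λ) and there is an index j0 ∈ [m] with a_{j0}* = 0 and w_{j0}* = 0, then for every unit vector u ∈ ℝ^d (‖u‖₂ = 1), |Σ_{i=1}^n ℓ'(−y_i f(x_i;θ*)) y_i (u^⊤(x_i⊙φ_{j0}))_+| ≤ λ_{j0}. -/
open scoped BigOperators
open MeasureTheory

noncomputable section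

lemma nn_taylor_bound (ℓ ℓ' : ℝ → ℝ) (hderiv : ∀ z, HasDerivAt ℓ (ℓ' z) z)
    (hlip : LipschitzWith 1 ℓ') (z h : ℝ) :
    |ℓ (z + h) - ℓ z - ℓ' z * h| ≤ h ^ 2 := by
  have key := Convex.norm_image_sub_le_of_norm_hasDerivWithin_le
    (f := fun x => ℓ x - ℓ' z * x) (f' := fun x => ℓ' x - ℓ' z) (C := |h|)
    (s := Set.uIcc z (z + h))
    (fun x _ => (((hderiv x).sub ((hasDerivAt_id x).const_mul (ℓ' z))).congr_deriv
      (by ring)).hasDerivWithinAt)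
    (fun x hx => by
      have h1 : dist (ℓ' x) (ℓ' z) ≤ 1 * dist x z := hlip.dist_le_mul x z
      have h2 : |x - z| ≤ |h| := by
        rw [Set.uIcc_eq_union] at hx
        rcases hx with hx | hx <;> rw [Set.mem_Icc] at hx <;>
          rw [abs_le] <;> constructor <;>
          nlinarith [neg_abs_le h, le_abs_self h]
      have : (1 : ℝ) * dist x z ≤ |h| := by simpa [Real.dist_eq] using h2
      simpa [Real.dist_eq, Real.norm_eq_abs] using h1.trans this)
    (convex_uIcc z (z + h)) (Set.left_mem_uIcc) (Set.right_mem_uIcc)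
  have heq : ℓ (z + h) - ℓ' z * (z + h) - (ℓ z - ℓ' z * z) = ℓ (z + h) - ℓ z - ℓ' z * h := by
    ring
  simp only [Real.norm_eq_abs] at key
  rw [heq] at key
  calc |ℓ (z + h) - ℓ z - ℓ' z * h| ≤ |h| * |z + h - z| := key
    _ = h ^ 2 := by rw [show z + h - z = h by ring, ← abs_mul, ← sq, abs_sq]

lemma nn_relu_homog (t z : ℝ) (ht : 0 ≤ t) : nnRelu (t * z) = t * nnRelu z := by
  unfold nnRelu
  rcases le_or_gt z 0 with hz | hz
  · rw [max_eq_right (by nlinarith), max_eq_right hz, mul_zero]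
  · rw [max_eq_left (by nlinarith), max_eq_left hz.le]

lemma nn_dot_smul {d : ℕ} (t : ℝ) (u v : Vec d) : nnDot (t • u) v = t * nnDot u v := by
  unfold nnDot
  rw [Finset.mul_sum]
  refine Finset.sum_congr rfl fun i _ => ?_
  simp only [PiLp.smul_apply, smul_eq_mul]
  ring

theorem inactive_neuron_flat_directions
    {d m n : ℕ} (φ : ℕ → Vec d)
    (X : Fin n → Vec d) (Y : Fin n → ℝ)
    (hY : ∀ i, Y i = 1 ∨ Y i = -1)
    (ℓ ℓ' : ℝ → ℝ) (hderiv : ∀ z, HasDerivAt ℓ (ℓ' z) z)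
    (hlip : LipschitzWith 1 ℓ')
    (lam : Fin m → ℝ) (hlam : ∀ j, 0 < lam j)
    (θstar : (Fin m → ℝ) × (Fin m → Vec d))
    (hmin : IsLocalMin (nnLoss ℓ φ X Y lam) θstar)
    (j0 : Fin m) (hj0a : θstar.1 j0 = 0) (hj0w : θstar.2 j0 = 0) :
    ∀ u : Vec d, ‖u‖ = 1 →
      |∑ i, ℓ' (-(Y i) * nnOut φ θstar.1 θstar.2 (X i)) * Y i *
          nnRelu (nnDot u (nnHad (X i) (φ (j0 : ℕ))))| ≤ lam j0 := by
  classical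
  intro u hu
  set r : Vec d → ℝ := fun x => nnRelu (nnDot u (nnHad x (φ (j0 : ℕ)))) with hrdef
  set zz : Fin n → ℝ := fun i => -(Y i) * nnOut φ θstar.1 θstar.2 (X i) with hzdef
  have hgoal : (∑ i, ℓ' (-(Y i) * nnOut φ θstar.1 θstar.2 (X i)) * Y i *
      nnRelu (nnDot u (nnHad (X i) (φ (j0 : ℕ))))) = ∑ i, ℓ' (zz i) * Y i * r (X i) := rfl
  rw [hgoal]
  set S := ∑ i, ℓ' (zz i) * Y i * r (X i) with hSdef
  set C := ∑ i, (r (X i)) ^ 2 with hCdef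
  have hC0 : 0 ≤ C := Finset.sum_nonneg fun i _ => sq_nonneg _
  have hY2 : ∀ i, (Y i) ^ 2 = 1 := fun i => by rcases hY i with h | h <;> rw [h] <;> norm_num
  obtain ⟨δ, hδ, hball⟩ := Metric.eventually_nhds_iff.mp hmin
  have key : ∀ s : ℝ, s = 1 ∨ s = -1 → s * S ≤ lam j0 := by
    intro s hs
    have hs2 : s ^ 2 = 1 := by rcases hs with h | h <;> rw [h] <;> norm_num
    have habs : |s| = 1 := by rcases hs with h | h <;> rw [h] <;> norm_num
    have main : ∀ t : ℝ, 0 < t → t < δ → s * S ≤ lam j0 + C * t ^ 2 := by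
      intro t ht htδ
      set θt : (Fin m → ℝ) × (Fin m → Vec d) :=
        (Function.update θstar.1 j0 (s * t), Function.update θstar.2 j0 (t • u)) with hθt
      -- distance bound
      have hdist : dist θt θstar < δ := by
        rw [Prod.dist_eq]
        have h1 : dist θt.1 θstar.1 ≤ t := by
          rw [hθt]
          refine dist_pi_le_iff ht.le |>.mpr fun b => ?_
          rcases eq_or_ne b j0 with rfl | hb
          · simp only [Function.update_self, hj0a, Real.dist_eq, sub_zero, abs_mul, habs,
              one_mul, abs_of_pos ht, le_refl]
          · simp [Function.update_of_ne hb, ht.le]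
        have h2 : dist θt.2 θstar.2 ≤ t := by
          rw [hθt]
          refine dist_pi_le_iff ht.le |>.mpr fun b => ?_
          rcases eq_or_ne b j0 with rfl | hb
          · simp only [Function.update_self, hj0w, dist_zero_right, norm_smul,
              Real.norm_eq_abs, hu, mul_one, abs_of_pos ht, le_refl]
          · simp [Function.update_of_ne hb, ht.le]
        exact lt_of_le_of_lt (max_le h1 h2) htδ
      have hL := hball hdist
      -- output formula
      have hout : ∀ x : Vec d,
          nnOut φ θt.1 θt.2 x = nnOut φ θstar.1 θstar.2 x + s * t ^ 2 * r x := by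
        intro x
        unfold nnOut
        have hterm : ∀ j : Fin m,
            θt.1 j * nnRelu (nnDot (θt.2 j) (nnHad x (φ (j : ℕ)))) =
            θstar.1 j * nnRelu (nnDot (θstar.2 j) (nnHad x (φ (j : ℕ)))) +
            (if j = j0 then s * t ^ 2 * r x else 0) := by
          intro j
          rcases eq_or_ne j j0 with rfl | hj
          · simp only [hθt, Function.update_self, hj0a, hj0w, if_pos rfl, if_true, zero_mul, zero_add]
            rw [nn_dot_smul, nn_relu_homog _ _ ht.le, hrdef]
            ring
          · simp [hθt, Function.update_of_ne hj, hj]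
        rw [Finset.sum_congr rfl fun j _ => hterm j, Finset.sum_add_distrib,
          Finset.sum_ite_eq' Finset.univ j0 (fun _ => s * t ^ 2 * r x)]
        simp
      -- regularizer formula
      have hreg : (∑ j, lam j * ((θt.1 j) ^ 2 + ‖θt.2 j‖ ^ 2)) =
          (∑ j, lam j * ((θstar.1 j) ^ 2 + ‖θstar.2 j‖ ^ 2)) + lam j0 * (2 * t ^ 2) := by
        have hterm : ∀ j : Fin m,
            lam j * ((θt.1 j) ^ 2 + ‖θt.2 j‖ ^ 2) =
            lam j * ((θstar.1 j) ^ 2 + ‖θstar.2 j‖ ^ 2) +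
            (if j = j0 then lam j0 * (2 * t ^ 2) else 0) := by
          intro j
          rcases eq_or_ne j j0 with rfl | hj
          · simp only [hθt, Function.update_self, hj0a, hj0w, if_pos rfl, if_true]
            rw [norm_smul]
            simp only [Real.norm_eq_abs, hu, mul_one, norm_zero]
            rw [mul_pow, hs2, sq_abs]
            ring
          · simp [hθt, Function.update_of_ne hj, hj]
        rw [Finset.sum_congr rfl fun j _ => hterm j, Finset.sum_add_distrib,
          Finset.sum_ite_eq' Finset.univ j0 (fun _ => lam j0 * (2 * t ^ 2))]
        simp
      -- Taylor estimate on the data term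
      have htay : (∑ i, ℓ (-(Y i) * nnOut φ θt.1 θt.2 (X i))) ≤
          (∑ i, ℓ (zz i)) + (-(s * t ^ 2)) * S + t ^ 4 * C := by
        have hpt : ∀ i : Fin n, ℓ (-(Y i) * nnOut φ θt.1 θt.2 (X i)) ≤
            ℓ (zz i) + ℓ' (zz i) * (-(Y i) * s * t ^ 2 * r (X i)) +
              (-(Y i) * s * t ^ 2 * r (X i)) ^ 2 := by
          intro i
          have harg : -(Y i) * nnOut φ θt.1 θt.2 (X i) =
              zz i + (-(Y i) * s * t ^ 2 * r (X i)) := by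
            rw [hout (X i), hzdef]; ring
          rw [harg]
          have := abs_le.mp (nn_taylor_bound ℓ ℓ' hderiv hlip (zz i)
            (-(Y i) * s * t ^ 2 * r (X i)))
          linarith [this.2]
        calc (∑ i, ℓ (-(Y i) * nnOut φ θt.1 θt.2 (X i))) ≤
            ∑ i, (ℓ (zz i) + ℓ' (zz i) * (-(Y i) * s * t ^ 2 * r (X i)) +
              (-(Y i) * s * t ^ 2 * r (X i)) ^ 2) := Finset.sum_le_sum fun i _ => hpt i
          _ = (∑ i, ℓ (zz i)) + (-(s * t ^ 2)) * S + t ^ 4 * C := by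
            rw [hSdef, hCdef, Finset.sum_add_distrib, Finset.sum_add_distrib,
              Finset.mul_sum, Finset.mul_sum]
            congr 1
            · congr 1
              refine Finset.sum_congr rfl fun i _ => ?_
              ring
            · refine Finset.sum_congr rfl fun i _ => ?_
              have : (-(Y i) * s * t ^ 2 * r (X i)) ^ 2 =
                  (Y i) ^ 2 * s ^ 2 * t ^ 4 * (r (X i)) ^ 2 := by ring
              rw [this, hY2 i, hs2]
              ring
      -- combine
      unfold nnLoss at hL
      have hzzeq : (∑ i, ℓ (-(Y i) * nnOut φ θstar.1 θstar.2 (X i))) = ∑ i, ℓ (zz i) := rfl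
      rw [hzzeq, hreg] at hL
      have ht2 : (0 : ℝ) < t ^ 2 := by positivity
      nlinarith [hL, htay]
    -- pass to the limit t → 0⁺
    by_contra hcon
    push_neg at hcon
    set ε := s * S - lam j0 with hε
    have hε0 : 0 < ε := by rw [hε]; linarith
    set t := min (δ / 2) (Real.sqrt (ε / (2 * (C + 1)))) with htdef
    have hsq : 0 < ε / (2 * (C + 1)) := by positivity
    have ht0 : 0 < t := lt_min (by linarith) (Real.sqrt_pos.mpr hsq)
    have htδ : t < δ := lt_of_le_of_lt (min_le_left _ _) (by linarith)
    have ht2 : t ^ 2 ≤ ε / (2 * (C + 1)) := by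
      have h1 : t ≤ Real.sqrt (ε / (2 * (C + 1))) := min_le_right _ _
      calc t ^ 2 ≤ (Real.sqrt (ε / (2 * (C + 1)))) ^ 2 := by nlinarith
        _ = ε / (2 * (C + 1)) := Real.sq_sqrt hsq.le
    have hmt := main t ht0 htδ
    have hCt : C * t ^ 2 < ε := by
      have h1 : C * t ^ 2 ≤ C * (ε / (2 * (C + 1))) :=
        mul_le_mul_of_nonneg_left ht2 hC0
      have hpos : (0 : ℝ) < 2 * (C + 1) := by linarith
      have h2 : C * (ε / (2 * (C + 1))) < ε := by
        rw [mul_div_assoc', div_lt_iff₀ hpos]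
        nlinarith [mul_nonneg hC0 hε0.le]
      linarith
    rw [hε] at hCt
    linarith
  rw [abs_le]
  constructor
  · have := key (-1) (Or.inr rfl)
    linarith
  · have := key 1 (Or.inl rfl)
    linarith
end
end

section
/- Let λ0 > 0, K > 0, n ≥ 1, and Q ≥ n+1 be given, let q_1,…,q_n ∈ ℝ^Q be arbitrary vectors, and let ρ_old ∈ ℝ^Q. Then there exists ρ ∈ ℝ^Q such that: (i) ρ_j ≤ (ρ_old)_j for every coordinate j ∈ [Q]; (ii) ‖ρ − ρ_old‖_∞ ≤ λ0/(2K); and (iii) for every p = (p_1,…,p_n) ∈ ℝ^n, ‖ρ − Σ_{i=1}^n p_i q_i‖₂ ≥ λ0/(8K). -/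
open scoped BigOperators RealInnerProductSpace

noncomputable section

private lemma key_dist (n Q : ℕ) (q : Fin n → EuclideanSpace ℝ (Fin Q))
    (u ρ : EuclideanSpace ℝ (Fin Q)) (hu : ‖u‖ = 1)
    (horth : ∀ i, ⟪q i, u⟫ = 0) (p : Fin n → ℝ) :
    |⟪ρ, u⟫| ≤ ‖ρ - ∑ i, p i • q i‖ := by
  have h1 : ⟪ρ - ∑ i, p i • q i, u⟫ = ⟪ρ, u⟫ := by
    rw [inner_sub_left, sum_inner]
    simp only [real_inner_smul_left, horth, mul_zero, Finset.sum_const_zero, sub_zero]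
  calc |⟪ρ, u⟫| = |⟪ρ - ∑ i, p i • q i, u⟫| := by rw [h1]
    _ ≤ ‖ρ - ∑ i, p i • q i‖ * ‖u‖ := abs_real_inner_le_norm _ _
    _ = ‖ρ - ∑ i, p i • q i‖ := by rw [hu, mul_one]

private lemma abs_sum_ge_one (Q : ℕ) (u : EuclideanSpace ℝ (Fin Q)) (hu : ‖u‖ = 1) :
    1 ≤ ∑ j, |u j| := by
  have h1 : ∑ j, u j * u j = 1 := by
    have := real_inner_self_eq_norm_sq u
    rw [hu] at this
    rw [PiLp.inner_apply] at this
    simpa [RCLike.inner_apply, ← sq] using this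
  have h2 : ∑ j, |u j| ^ 2 ≤ (∑ j, |u j|) ^ 2 :=
    Finset.sum_sq_le_sq_sum_of_nonneg (fun i _ => abs_nonneg _)
  have h3 : ∑ j, |u j| ^ 2 = 1 := by
    rw [← h1]; congr 1; ext j; rw [sq_abs, sq]
  nlinarith [Finset.sum_nonneg (fun j (_ : j ∈ Finset.univ) => abs_nonneg (u j))]

theorem exists_regularization_coefficients
    (lam0 K : ℝ) (hlam0 : 0 < lam0) (hK : 0 < K)
    (n Q : ℕ) (hn : 1 ≤ n) (hQ : n + 1 ≤ Q)
    (q : Fin n → EuclideanSpace ℝ (Fin Q))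
    (ρold : EuclideanSpace ℝ (Fin Q)) :
    ∃ ρ : EuclideanSpace ℝ (Fin Q),
      (∀ j : Fin Q, ρ j ≤ ρold j) ∧
      (∀ j : Fin Q, |ρ j - ρold j| ≤ lam0 / (2 * K)) ∧
      (∀ p : Fin n → ℝ, lam0 / (8 * K) ≤ ‖ρ - ∑ i, p i • q i‖) := by
  classical
  -- obtain a unit vector orthogonal to all q i
  obtain ⟨u, hu, horth⟩ : ∃ u : EuclideanSpace ℝ (Fin Q), ‖u‖ = 1 ∧ ∀ i, ⟪q i, u⟫ = 0 := by
    set S := Submodule.span ℝ (Set.range q) with hS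
    have hfin : Module.finrank ℝ S < Q := by
      have h1 : Module.finrank ℝ S ≤ n := by
        refine (finrank_span_le_card _).trans ?_
        rw [Set.toFinset_card]
        simpa using Fintype.card_range_le q
      omega
    have hSne : S ≠ ⊤ := by
      intro hT
      rw [hT] at hfin
      simp at hfin
    have hbot : Sᗮ ≠ ⊥ := fun hb => hSne (Submodule.orthogonal_eq_bot_iff.mp hb)
    obtain ⟨v, hvS, hv0⟩ := Submodule.ne_bot_iff _ |>.mp hbot
    refine ⟨‖v‖⁻¹ • v, ?_, ?_⟩
    · simp [norm_smul, inv_mul_cancel₀ (norm_ne_zero_iff.mpr hv0)]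
    · intro i
      rw [real_inner_smul_right]
      have : ⟪q i, v⟫ = 0 := hvS _ (Submodule.subset_span ⟨i, rfl⟩)
      simp [this]
  set toE : (Fin Q → ℝ) → EuclideanSpace ℝ (Fin Q) := fun s => (WithLp.equiv 2 (Fin Q → ℝ)).symm s with htoE
  have htoE_apply : ∀ (s : Fin Q → ℝ) (j : Fin Q), toE s j = s j := fun _ _ => rfl
  set c : ℝ := lam0 / (2 * K) with hc
  have hcpos : 0 < c := by positivity
  -- it suffices to find a shift s with 0 ≤ s j ≤ c and large inner product
  suffices h : ∃ s : Fin Q → ℝ, (∀ j, 0 ≤ s j ∧ s j ≤ c) ∧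
      lam0 / (8 * K) ≤ |⟪(ρold - toE s), u⟫| by
    obtain ⟨s, hs, hinner⟩ := h
    refine ⟨ρold - toE s, ?_, ?_, ?_⟩
    · intro j
      have h1 : (ρold - toE s) j = ρold j - s j := rfl
      rw [h1]
      linarith [(hs j).1]
    · intro j
      have h1 : (ρold - toE s) j = ρold j - s j := rfl
      rw [h1, abs_le]
      constructor <;> [linarith [(hs j).2]; linarith [(hs j).1]]
    · intro p
      exact le_trans hinner (key_dist n Q q u _ hu horth p)
  -- two candidate shifts
  set P : ℝ := ∑ j, if 0 ≤ u j then u j else 0 with hP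
  set N : ℝ := ∑ j, if 0 ≤ u j then 0 else u j with hN
  set A : ℝ := ⟪ρold, u⟫ with hA
  have hPN : (1 : ℝ) ≤ P - N := by
    have : P - N = ∑ j, |u j| := by
      rw [hP, hN, ← Finset.sum_sub_distrib]
      refine Finset.sum_congr rfl fun j _ => ?_
      split_ifs with h
      · rw [sub_zero, abs_of_nonneg h]
      · rw [zero_sub, abs_of_neg (lt_of_not_ge h)]
    rw [this]
    exact abs_sum_ge_one Q u hu
  set sP : Fin Q → ℝ := fun j => if 0 ≤ u j then c else 0 with hsP
  set sN : Fin Q → ℝ := fun j => if 0 ≤ u j then 0 else c with hsN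
  have hinnP : ⟪(ρold - toE sP), u⟫ = A - c * P := by
    rw [inner_sub_left, ← hA]
    congr 1
    rw [PiLp.inner_apply, hP, Finset.mul_sum]
    refine Finset.sum_congr rfl fun j _ => ?_
    have h1 : toE sP j = sP j := rfl
    simp only [RCLike.inner_apply, conj_trivial, h1, hsP]
    by_cases h : 0 ≤ u j <;> simp [h, htoE_apply] <;> ring
  have hinnN : ⟪(ρold - toE sN), u⟫ = A - c * N := by
    rw [inner_sub_left, ← hA]
    congr 1
    rw [PiLp.inner_apply, hN, Finset.mul_sum]
    refine Finset.sum_congr rfl fun j _ => ?_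
    have h1 : toE sN j = sN j := rfl
    simp only [RCLike.inner_apply, conj_trivial, h1, hsN]
    by_cases h : 0 ≤ u j <;> simp [h, htoE_apply] <;> ring
  have hgap : c ≤ (A - c * N) - (A - c * P) := by
    have : (A - c * N) - (A - c * P) = c * (P - N) := by ring
    rw [this]
    calc c = c * 1 := by ring
      _ ≤ c * (P - N) := by
          exact mul_le_mul_of_nonneg_left hPN (le_of_lt hcpos)
  have h8 : lam0 / (8 * K) ≤ c / 2 := by
    rw [hc, div_div]
    exact div_le_div_of_nonneg_left hlam0.le (by positivity) (by linarith)
  by_cases hcase : c / 2 ≤ A - c * N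
  · refine ⟨sN, fun j => ?_, ?_⟩
    · rw [hsN]; constructor <;> (by_cases h : 0 ≤ u j <;> simp [h, le_of_lt hcpos])
    · rw [hinnN]
      refine le_trans h8 (le_trans hcase (le_abs_self _))
  · refine ⟨sP, fun j => ?_, ?_⟩
    · rw [hsP]; constructor <;> (by_cases h : 0 ≤ u j <;> simp [h, le_of_lt hcpos])
    · rw [hinnP]
      push_neg at hcase
      have : A - c * P ≤ -(c / 2) := by linarith
      refine le_trans h8 ?_
      calc c / 2 ≤ -(A - c * P) := by linarith
        _ ≤ |A - c * P| := neg_le_abs _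
end
end
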